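/- arXiv:1911.01722 — 9 statements merged into one kernel-verified Lean document; each statement's English description precedes it below -/
import Mathlib

section
/- Let k ≥ 1 be an integer, p ≡ 1 (mod 2k+2) a prime, and B a nonsingular perfect B[-k,k+2](p) splitter set. If i ∈ B, then the entire coset i·⟨-(k+1)/(k+2)⟩ (where ⟨-(k+1)/(k+2)⟩ is the multiplicative subgroup of Z_p* generated by -(k+1)/(k+2)) is contained in B. In particular, the multiplicative order of -(k+1)/(k+2) modulo p is odd. -/
/-- `b·[-k1,k2]* = {b·j mod q : -k1 ≤ j ≤ k2, j ≠ 0}` as a finset of `ZMod q`. -/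
noncomputable def bStar (k1 k2 q : ℕ) (b : ZMod q) : Finset (ZMod q) :=
  ((Finset.Icc (-(k1 : ℤ)) (k2 : ℤ)).erase 0).image (fun j : ℤ => b * (j : ZMod q))

/-- `B` is a `B[-k1,k2](q)` splitter set. -/
def IsSplitter (k1 k2 q : ℕ) (B : Finset (ZMod q)) : Prop :=
  (∀ b ∈ B, (bStar k1 k2 q b).card = k1 + k2) ∧
  ((B : Set (ZMod q)).Pairwise fun b b' => Disjoint (bStar k1 k2 q b) (bStar k1 k2 q b'))

/-- `B` is a perfect splitter set: `|B| = (q-1)/(k1+k2)` with exact division. -/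
def IsPerfectSplitter (k1 k2 q : ℕ) (B : Finset (ZMod q)) : Prop :=
  IsSplitter k1 k2 q B ∧ (k1 + k2) * B.card = q - 1

lemma mem_bStar {k1 k2 q : ℕ} {b x : ZMod q} :
    x ∈ bStar k1 k2 q b ↔
      ∃ j : ℤ, (-(k1 : ℤ) ≤ j ∧ j ≤ (k2 : ℤ)) ∧ j ≠ 0 ∧ b * (j : ZMod q) = x := by
  unfold bStar
  simp only [Finset.mem_image, Finset.mem_erase, Finset.mem_Icc]
  constructor
  · rintro ⟨j, ⟨hj0, hj1, hj2⟩, h⟩; exact ⟨j, ⟨hj1, hj2⟩, hj0, h⟩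
  · rintro ⟨j, ⟨hj1, hj2⟩, hj0, h⟩; exact ⟨j, ⟨hj0, hj1, hj2⟩, h⟩

lemma mem_bStar_of {k1 k2 q : ℕ} {b : ZMod q} {j : ℤ}
    (h1 : -(k1 : ℤ) ≤ j) (h2 : j ≤ (k2 : ℤ)) (h0 : j ≠ 0) :
    b * (j : ZMod q) ∈ bStar k1 k2 q b :=
  mem_bStar.mpr ⟨j, ⟨h1, h2⟩, h0, rfl⟩

theorem stmt_1 (k p : ℕ) (hk : 1 ≤ k) (hp : p.Prime) (hmod : p % (2 * k + 2) = 1)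
    (B : Finset (ZMod p)) (hB : IsPerfectSplitter k (k + 2) p B)
    (hns : Nat.Coprime p (Nat.factorial (k + 2))) :
    (∀ i ∈ B, ∀ n : ℕ,
        i * (-((k + 1 : ZMod p) * (k + 2 : ZMod p)⁻¹)) ^ n ∈ B) ∧
      Odd (orderOf (-((k + 1 : ZMod p) * (k + 2 : ZMod p)⁻¹))) := by
  haveI : Fact p.Prime := ⟨hp⟩
  haveI : NeZero p := ⟨hp.ne_zero⟩
  set g : ZMod p := -((k + 1 : ZMod p) * (k + 2 : ZMod p)⁻¹) with hg
  have hp2 : 2 ≤ p := hp.two_le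
  -- p ≥ 2k+3
  have hple : 2 * k + 3 ≤ p := by
    by_contra h
    push_neg at h
    rcases (by omega : p < 2 * k + 2 ∨ p = 2 * k + 2) with h' | h'
    · rw [Nat.mod_eq_of_lt h'] at hmod; omega
    · rw [h', Nat.mod_self] at hmod; omega
  -- casts of small naturals are nonzero
  have hnz : ∀ m : ℕ, 1 ≤ m → m ≤ k + 2 → ((m : ZMod p) ≠ 0) := by
    intro m h1 h2 h0
    rw [ZMod.natCast_eq_zero_iff] at h0
    have hdvd : p ∣ Nat.factorial (k + 2) := h0.trans (Nat.dvd_factorial h1 h2)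
    have h1 : p ∣ 1 := hns ▸ Nat.dvd_gcd dvd_rfl hdvd
    have := Nat.le_of_dvd one_pos h1
    omega
  have hznz : ∀ j : ℤ, -(k : ℤ) ≤ j → j ≤ (k : ℤ) + 2 → j ≠ 0 → ((j : ZMod p) ≠ 0) := by
    intro j h1 h2 h3 h0
    rw [ZMod.intCast_zmod_eq_zero_iff_dvd] at h0
    have habs : (p : ℤ) ≤ |j| := Int.le_of_dvd (abs_pos.mpr h3) ((dvd_abs _ _).mpr h0)
    have : |j| ≤ (k : ℤ) + 2 := abs_le.mpr ⟨by omega, by omega⟩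
    omega
  have hk1 : ((k : ZMod p) + 1) ≠ 0 := by
    have := hnz (k + 1) (by omega) (by omega); push_cast at this; exact this
  have hk2 : ((k : ZMod p) + 2) ≠ 0 := by
    have := hnz (k + 2) (by omega) (by omega); push_cast at this; exact this
  have hb0 : ∀ b ∈ B, b ≠ 0 := by
    intro b hb hb00
    have hcard := hB.1.1 b hb
    have hsub : bStar k (k + 2) p b ⊆ {0} := by
      intro x hx
      rw [mem_bStar] at hx
      obtain ⟨j, _, _, hje⟩ := hx
      simp [← hje, hb00]
    have hle := Finset.card_le_card hsub
    rw [Finset.card_singleton] at hle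
    omega
  have h0notmem : ∀ b ∈ B, (0 : ZMod p) ∉ bStar k (k + 2) p b := by
    intro b hb h0
    rw [mem_bStar] at h0
    obtain ⟨j, ⟨hj1, hj2⟩, hj0, hje⟩ := h0
    push_cast at hj2
    exact mul_ne_zero (hb0 b hb) (hznz j hj1 hj2 hj0) hje
  have hdisj : ∀ a ∈ B, ∀ c ∈ B, a ≠ c →
      Disjoint (bStar k (k + 2) p a) (bStar k (k + 2) p c) :=
    fun a ha c hc hac => hB.1.2 (Finset.mem_coe.mpr ha) (Finset.mem_coe.mpr hc) hac
  -- the sets bStar b cover all of Z_p \ {0}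
  have hpart : ∀ x : ZMod p, x ≠ 0 → ∃ b ∈ B, x ∈ bStar k (k + 2) p b := by
    have hcard : (B.biUnion (bStar k (k + 2) p)).card = p - 1 := by
      rw [Finset.card_biUnion hdisj]
      calc ∑ b ∈ B, (bStar k (k + 2) p b).card = ∑ _b ∈ B, (k + (k + 2)) :=
            Finset.sum_congr rfl (fun b hb => hB.1.1 b hb)
        _ = B.card * (k + (k + 2)) := by simp [Finset.sum_const, Nat.smul_one_eq_cast]
        _ = p - 1 := by rw [mul_comm]; exact hB.2
    have hsub : B.biUnion (bStar k (k + 2) p) ⊆ Finset.univ.erase 0 := by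
      intro x hx
      obtain ⟨b, hb, hxb⟩ := Finset.mem_biUnion.mp hx
      refine Finset.mem_erase.mpr ⟨?_, Finset.mem_univ _⟩
      rintro rfl
      exact h0notmem b hb hxb
    have hcard2 : (Finset.univ.erase (0 : ZMod p)).card = p - 1 := by
      rw [Finset.card_erase_of_mem (Finset.mem_univ _), Finset.card_univ, ZMod.card]
    have heq : B.biUnion (bStar k (k + 2) p) = Finset.univ.erase 0 :=
      Finset.eq_of_subset_of_card_le hsub (by rw [hcard, hcard2])
    intro x hx
    have hx' : x ∈ B.biUnion (bStar k (k + 2) p) := by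
      rw [heq]; exact Finset.mem_erase.mpr ⟨hx, Finset.mem_univ _⟩
    exact Finset.mem_biUnion.mp hx'
  -- the key step
  have key : ∀ i ∈ B, i * g ∈ B := by
    by_cases hcase : ((2 * k + 3 : ℕ) : ZMod p) = 0
    · -- degenerate case: g = 1
      have hg1 : g = 1 := by
        push_cast at hcase
        have h22 : ((k : ZMod p) + 2) = -((k : ZMod p) + 1) := by linear_combination hcase
        rw [hg, h22, inv_neg, mul_neg, mul_inv_cancel₀ hk1, neg_neg]
      intro i hi
      rw [hg1, mul_one]; exact hi
    · intro i hi
      have hi0 : i ≠ 0 := hb0 i hi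
      have hx0 : (-(i * ((k : ZMod p) + 1))) ≠ 0 :=
        neg_ne_zero.mpr (mul_ne_zero hi0 hk1)
      obtain ⟨b, hbB, hxb⟩ := hpart _ hx0
      rw [mem_bStar] at hxb
      obtain ⟨j, ⟨hj1, hj2⟩, hj0, hxeq⟩ := hxb
      push_cast at hj2
      have hbi : b ≠ i := by
        rintro rfl
        have h1 : ((j + (k : ℤ) + 1 : ℤ) : ZMod p) = 0 := by
          have h2 : b * ((j : ZMod p) + ((k : ZMod p) + 1)) = 0 := by
            linear_combination hxeq
          rcases mul_eq_zero.mp h2 with h | h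
          · exact absurd h hi0
          · push_cast; linear_combination h
        rw [ZMod.intCast_zmod_eq_zero_iff_dvd] at h1
        have hj3 : 0 < j + (k : ℤ) + 1 := by omega
        have hle := Int.le_of_dvd hj3 h1
        have hp23 : p = 2 * k + 3 := by omega
        apply hcase
        rw [← hp23]
        exact ZMod.natCast_self p
      have hd := hdisj i hi b hbB hbi.symm
      rcases (by omega : j ≤ (k : ℤ) ∨ j = (k : ℤ) + 1 ∨ j = (k : ℤ) + 2) with hle | hj | rfl
      · exfalso
        have h1 : i * (((k : ℤ) + 1 : ℤ) : ZMod p) ∈ bStar k (k + 2) p i :=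
          mem_bStar_of (by omega) (by push_cast; omega) (by omega)
        have h2 : i * (((k : ℤ) + 1 : ℤ) : ZMod p) ∈ bStar k (k + 2) p b := by
          have hm := mem_bStar_of (b := b) (q := p) (k1 := k) (k2 := k + 2) (j := -j)
            (by omega) (by push_cast; omega) (by omega)
          have heq2 : b * ((-j : ℤ) : ZMod p) = i * (((k : ℤ) + 1 : ℤ) : ZMod p) := by
            push_cast
            linear_combination -hxeq
          rwa [heq2] at hm
        exact Finset.disjoint_left.mp hd h1 h2
      · exfalso
        subst hj
        have hbneg : b = -i := by
          have h2 : (b + i) * ((k : ZMod p) + 1) = 0 := by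
            push_cast at hxeq
            linear_combination hxeq
          rcases mul_eq_zero.mp h2 with h | h
          · exact eq_neg_of_add_eq_zero_left h
          · exact absurd h hk1
        have h1 : i ∈ bStar k (k + 2) p i := by
          have hm := mem_bStar_of (b := i) (q := p) (k1 := k) (k2 := k + 2) (j := 1)
            (by omega) (by push_cast; omega) one_ne_zero
          simpa using hm
        have h2 : i ∈ bStar k (k + 2) p b := by
          have hm := mem_bStar_of (b := b) (q := p) (k1 := k) (k2 := k + 2) (j := -1)
            (by omega) (by push_cast; omega) (by omega)
          rw [hbneg] at hm ⊢
          simpa using hm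
        exact Finset.disjoint_left.mp hd h1 h2
      · have hbg : b = i * g := by
          push_cast at hxeq
          rw [hg]
          push_cast
          field_simp
          linear_combination hxeq
        exact hbg ▸ hbB
  -- closure under powers
  have closure : ∀ i ∈ B, ∀ n : ℕ, i * g ^ n ∈ B := by
    intro i hi n
    induction n with
    | zero => simpa using hi
    | succ n ih =>
      rw [pow_succ, ← mul_assoc]
      exact key _ ih
  refine ⟨closure, ?_⟩
  have hgne : g ≠ 0 := by
    rw [hg]
    exact neg_ne_zero.mpr (mul_ne_zero hk1 (inv_ne_zero hk2))
  have hord : 0 < orderOf g := by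
    have h1 : g ^ (p - 1) = 1 := ZMod.pow_card_sub_one_eq_one hgne
    have hfin : IsOfFinOrder g := isOfFinOrder_iff_pow_eq_one.mpr ⟨p - 1, by omega, h1⟩
    exact hfin.orderOf_pos
  rcases Nat.even_or_odd (orderOf g) with he | ho
  · exfalso
    obtain ⟨m, hm⟩ := he
    have hm0 : 0 < m := by omega
    have hne1 : g ^ m ≠ 1 := by
      intro h
      have := orderOf_le_of_pow_eq_one hm0 h
      omega
    have hsq : g ^ m * g ^ m = 1 := by
      rw [← pow_add, ← hm]
      exact pow_orderOf_eq_one g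
    have hneg : g ^ m = -1 := by
      have h2 : (g ^ m - 1) * (g ^ m + 1) = 0 := by linear_combination hsq
      rcases mul_eq_zero.mp h2 with h | h
      · exact absurd (by linear_combination h) hne1
      · linear_combination h
    obtain ⟨i, hi⟩ : ∃ i, i ∈ B := by
      have h2 := hB.2
      rcases Finset.eq_empty_or_nonempty B with hE | ⟨i, hi⟩
      · rw [hE] at h2; simp at h2; omega
      · exact ⟨i, hi⟩
    have hmi : -i ∈ B := by
      have hc := closure i hi m
      rw [hneg] at hc
      simpa using hc
    have hi0 : i ≠ 0 := hb0 i hi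
    have h2nz : (2 : ZMod p) ≠ 0 := by
      have := hnz 2 (by omega) (by omega); exact_mod_cast this
    have hii : i ≠ -i := by
      intro h
      have h2 : (2 : ZMod p) * i = 0 := by linear_combination h
      rcases mul_eq_zero.mp h2 with h' | h'
      · exact h2nz h'
      · exact hi0 h'
    have hd := hdisj i hi (-i) hmi hii
    have h1 : i ∈ bStar k (k + 2) p i := by
      have hm := mem_bStar_of (b := i) (q := p) (k1 := k) (k2 := k + 2) (j := 1)
        (by omega) (by push_cast; omega) one_ne_zero
      simpa using hm
    have h2 : i ∈ bStar k (k + 2) p (-i) := by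
      have hm := mem_bStar_of (b := -i) (q := p) (k1 := k) (k2 := k + 2) (j := -1)
        (by omega) (by push_cast; omega) (by omega)
      simpa using hm
    exact Finset.disjoint_left.mp hd h1 h2
  · exact ho
end

section
/- Let m and n be coprime positive integers, A = {a_1,...,a_m} a set of m integers and B = {b_1,...,b_n} a set of n integers. If the sumset A + B = {a_i + b_j} is a complete set of representatives modulo mn (i.e., its elements are pairwise incongruent modulo mn), then A is a complete set of residues modulo m and B is a complete set of residues modulo n. -/
open Finset AddMonoidAlgebra

private def cnt (N : ℕ) (A B : Finset ℤ) (k : ℕ) (t : ZMod N) : ℕ :=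
  ((A ×ˢ B).filter (fun ab => (((k : ℤ) * ab.1 + ab.2 : ℤ) : ZMod N) = t)).card

private lemma prod_eq (p N : ℕ) [NeZero N] (A B : Finset ℤ) (k : ℕ) :
    (∑ a ∈ A, (single (((k : ℤ) * a : ℤ) : ZMod N) (1 : ZMod p) :
        AddMonoidAlgebra (ZMod p) (ZMod N))) *
      (∑ b ∈ B, single ((b : ℤ) : ZMod N) (1 : ZMod p)) =
    ∑ t : ZMod N, single t ((cnt N A B k t : ℕ) : ZMod p) := by
  classical
  rw [Finset.sum_mul_sum]
  have h1 : ∀ a b : ℤ,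
      (single (((k : ℤ) * a : ℤ) : ZMod N) (1 : ZMod p) :
        AddMonoidAlgebra (ZMod p) (ZMod N)) * single ((b : ℤ) : ZMod N) 1
      = single ((((k : ℤ) * a + b : ℤ)) : ZMod N) 1 := by
    intro a b
    rw [AddMonoidAlgebra.single_mul_single, one_mul, Int.cast_add]
  simp_rw [h1]
  rw [← Finset.sum_product']
  rw [← Finset.sum_fiberwise (A ×ˢ B) (fun ab => (((k : ℤ) * ab.1 + ab.2 : ℤ) : ZMod N))
    (fun ab => (single (((k : ℤ) * ab.1 + ab.2 : ℤ) : ZMod N) (1 : ZMod p) :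
        AddMonoidAlgebra (ZMod p) (ZMod N)))]
  refine Finset.sum_congr rfl fun t _ => ?_
  rw [Finset.sum_congr rfl (fun ab hab => ?_), Finset.sum_const, cnt,
    AddMonoidAlgebra.smul_single, nsmul_eq_mul, mul_one]
  rw [(Finset.mem_filter.1 hab).2]

private lemma sum_single_apply {R : Type*} [Semiring R] {N : ℕ} [NeZero N]
    (f : ZMod N → R) (t : ZMod N) :
    (∑ x : ZMod N, (single x (f x) : AddMonoidAlgebra R (ZMod N))).coeff t = f t := by
  classical
  rw [AddMonoidAlgebra.coeff_sum, Finsupp.finset_sum_apply]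
  simp_rw [AddMonoidAlgebra.coeff_single, Finsupp.single_apply]
  rw [Finset.sum_ite_eq' univ t f, if_pos (Finset.mem_univ t)]

private lemma step (p N m : ℕ) [NeZero N] (hp : p.Prime) (hpm : ¬ p ∣ m)
    (A B : Finset ℤ) (hA : A.card = m) (hcards : (A ×ˢ B).card = N) (k : ℕ)
    (h1 : ∀ t, cnt N A B k t = 1) : ∀ t, cnt N A B (p * k) t = 1 := by
  classical
  haveI : Fact p.Prime := ⟨hp⟩
  haveI : CharP (AddMonoidAlgebra (ZMod p) (ZMod N)) p := by
    constructor
    intro x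
    rw [AddMonoidAlgebra.natCast_def, AddMonoidAlgebra.single_eq_zero,
      ZMod.natCast_eq_zero_iff]
  haveI : ExpChar (AddMonoidAlgebra (ZMod p) (ZMod N)) p := ExpChar.prime hp
  set R := ZMod p
  set α : AddMonoidAlgebra R (ZMod N) :=
    ∑ a ∈ A, single (((k : ℤ) * a : ℤ) : ZMod N) (1 : R) with hα
  set β : AddMonoidAlgebra R (ZMod N) :=
    ∑ b ∈ B, single ((b : ℤ) : ZMod N) (1 : R) with hβ
  set T : AddMonoidAlgebra R (ZMod N) := ∑ t : ZMod N, single t (1 : R) with hTdef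
  have hαβ : α * β = T := by
    rw [hα, hβ, prod_eq, hTdef]
    simp [h1]
  have hsT : ∀ g : ZMod N, (single g (1 : R) : AddMonoidAlgebra R (ZMod N)) * T = T := by
    intro g
    rw [hTdef, Finset.mul_sum]
    simp_rw [AddMonoidAlgebra.single_mul_single, one_mul]
    exact Fintype.sum_equiv (Equiv.addLeft g) _ _ (fun t => rfl)
  have hαT : α * T = (m : R) • T := by
    rw [hα, Finset.sum_mul]
    simp_rw [hsT]
    rw [Finset.sum_const, hA, Nat.cast_smul_eq_nsmul]
  have hpow : ∀ j : ℕ, α ^ j * T = ((m : R) ^ j) • T := by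
    intro j
    induction j with
    | zero => simp
    | succ j ih =>
      rw [pow_succ, mul_assoc, hαT, mul_smul_comm, ih, smul_smul, pow_succ]
      rw [mul_comm]
  have hmne : (m : R) ≠ 0 := by
    rw [Ne, ZMod.natCast_eq_zero_iff]
    exact hpm
  have hfrob : α ^ p = ∑ a ∈ A, single ((((p * k : ℕ) : ℤ) * a : ℤ) : ZMod N) (1 : R) := by
    rw [hα, sum_pow_char]
    refine Finset.sum_congr rfl fun a _ => ?_
    rw [AddMonoidAlgebra.single_pow, one_pow]
    congr 1
    rw [nsmul_eq_mul]
    push_cast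
    ring
  have hp1 : α ^ p * β = T := by
    rw [← pow_sub_one_mul hp.pos.ne' α, mul_assoc, hαβ, hpow, ZMod.pow_card_sub_one_eq_one hmne, one_smul]
  have hmain : ∀ t : ZMod N, ((cnt N A B (p * k) t : ℕ) : R) = 1 := by
    intro t
    have h2 : (∑ t : ZMod N, (single t ((cnt N A B (p * k) t : ℕ) : R) :
        AddMonoidAlgebra R (ZMod N))) = ∑ t : ZMod N, single t (1 : R) := by
      rw [← prod_eq, ← hfrob, hp1, hTdef]
    have := congrArg (fun x : AddMonoidAlgebra R (ZMod N) => x.coeff t) h2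
    simpa only [sum_single_apply] using this
  have hge : ∀ t : ZMod N, 1 ≤ cnt N A B (p * k) t := by
    intro t
    by_contra h
    have h0 : cnt N A B (p * k) t = 0 := by omega
    have := hmain t
    rw [h0] at this
    simp only [Nat.cast_zero] at this
    exact zero_ne_one this
  have hsumtot : ∑ t : ZMod N, cnt N A B (p * k) t = N := by
    have h3 := Finset.card_eq_sum_card_fiberwise
      (f := fun ab : ℤ × ℤ => ((((p * k : ℕ) : ℤ) * ab.1 + ab.2 : ℤ) : ZMod N))
      (s := A ×ˢ B) (t := (univ : Finset (ZMod N)))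
      (fun x _ => Finset.mem_univ _)
    rw [hcards] at h3
    simpa [cnt] using h3.symm
  intro t
  by_contra h
  have h2 : 2 ≤ cnt N A B (p * k) t := by have := hge t; omega
  have hlt : ∑ _t : ZMod N, 1 < ∑ t : ZMod N, cnt N A B (p * k) t := by
    refine Finset.sum_lt_sum (fun i _ => hge i) ⟨t, Finset.mem_univ t, by omega⟩
  rw [hsumtot] at hlt
  simp only [Finset.sum_const, Finset.card_univ, smul_eq_mul, mul_one, ZMod.card] at hlt
  omega

private lemma iter (N m : ℕ) [NeZero N] (A B : Finset ℤ) (hA : A.card = m)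
    (hcards : (A ×ˢ B).card = N) (hbase : ∀ t, cnt N A B 1 t = 1) :
    ∀ k : ℕ, 0 < k → (∀ q : ℕ, q.Prime → q ∣ k → ¬ q ∣ m) →
      ∀ t, cnt N A B k t = 1 := by
  intro k
  induction k using Nat.strong_induction_on with
  | _ k ih =>
    intro hk hq t
    rcases eq_or_lt_of_le (Nat.one_le_iff_ne_zero.2 hk.ne') with h1 | h2
    · rw [← h1]; exact hbase t
    · obtain ⟨q, hqp, hqd⟩ := Nat.exists_prime_and_dvd (by omega : k ≠ 1)
      obtain ⟨j, hj⟩ := hqd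
      have hj0 : 0 < j := by
        rcases Nat.eq_zero_or_pos j with h | h
        · subst h; rw [mul_zero] at hj; omega
        · exact h
      have hjk : j < k := by
        have := hqp.two_le
        calc j < q * j := by nlinarith
        _ = k := hj.symm
      have hrec : ∀ t, cnt N A B j t = 1 :=
        ih j hjk hj0 (fun r hr hrd => hq r hr (hj ▸ hrd.mul_left q))
      have := step q N m hqp (hq q hqp ⟨j, hj⟩) A B hA hcards j hrec t
      rwa [← hj] at this

private lemma aux (m n : ℕ) (hm : 0 < m) (hn : 0 < n) (hmn : Nat.Coprime m n)
    (A B : Finset ℤ) (hA : A.card = m) (hB : B.card = n)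
    (hsum : ∀ a ∈ A, ∀ b ∈ B, ∀ a' ∈ A, ∀ b' ∈ B,
      ((m * n : ℕ) : ℤ) ∣ (a + b) - (a' + b') → a = a' ∧ b = b') :
    ∀ r : ℤ, ∃! b, b ∈ B ∧ (n : ℤ) ∣ b - r := by
  classical
  haveI : NeZero (m * n) := ⟨by positivity⟩
  haveI : NeZero n := ⟨hn.ne'⟩
  set N := m * n with hN
  have hcards : (A ×ˢ B).card = N := by rw [Finset.card_product, hA, hB]
  -- the sum map is injective on A ×ˢ B
  have hinj : Set.InjOn (fun ab : ℤ × ℤ => ((((1:ℕ) : ℤ) * ab.1 + ab.2 : ℤ) : ZMod N))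
      (A ×ˢ B : Finset (ℤ × ℤ)) := by
    intro x hx y hy hxy
    simp only [Finset.coe_product, Set.mem_prod, Finset.mem_coe] at hx hy
    have hmod := (ZMod.intCast_eq_intCast_iff _ _ _).1 hxy
    have hdvd : ((m * n : ℕ) : ℤ) ∣ (x.1 + x.2) - (y.1 + y.2) := by
      have := (Int.ModEq.dvd hmod)
      push_cast at this ⊢
      have h2 : ((m : ℤ) * n) ∣ -((1 * y.1 + y.2) - (1 * x.1 + x.2)) := dvd_neg.2 this
      calc ((m:ℤ) * n) ∣ -((1 * y.1 + y.2) - (1 * x.1 + x.2)) := h2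
      _ = (x.1 + x.2) - (y.1 + y.2) := by ring
    obtain ⟨h1, h2⟩ := hsum x.1 hx.1 x.2 hx.2 y.1 hy.1 y.2 hy.2 hdvd
    exact Prod.ext h1 h2
  have hbase : ∀ t, cnt N A B 1 t = 1 := by
    intro t
    have himg : Finset.image (fun ab : ℤ × ℤ => ((((1:ℕ) : ℤ) * ab.1 + ab.2 : ℤ) : ZMod N))
        (A ×ˢ B) = univ := by
      apply Finset.eq_univ_of_card
      rw [Finset.card_image_of_injOn hinj, hcards, ZMod.card]
    have hmem : t ∈ Finset.image (fun ab : ℤ × ℤ => ((((1:ℕ) : ℤ) * ab.1 + ab.2 : ℤ) : ZMod N))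
        (A ×ˢ B) := by rw [himg]; exact Finset.mem_univ t
    obtain ⟨ab, habm, habe⟩ := Finset.mem_image.1 hmem
    have hle : cnt N A B 1 t ≤ 1 := by
      apply Finset.card_le_one.2
      intro x hx y hy
      rw [Finset.mem_filter] at hx hy
      refine hinj hx.1 hy.1 ?_
      simp only
      rw [hx.2, hy.2]
    have hge : 1 ≤ cnt N A B 1 t := by
      rw [cnt, Nat.succ_le_iff, Finset.card_pos]
      refine ⟨ab, Finset.mem_filter.2 ⟨habm, ?_⟩⟩
      simpa using habe
    omega
  have hq : ∀ q : ℕ, q.Prime → q ∣ n → ¬ q ∣ m := by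
    intro q hqp hqn hqm
    have : q ∣ 1 := hmn ▸ Nat.dvd_gcd hqm hqn
    exact hqp.one_lt.ne' (Nat.dvd_one.1 this)
  have hcnt : ∀ t, cnt N A B n t = 1 := iter N m A B hA hcards hbase n hn hq
  -- existence: every residue class mod n meets B
  have hex : ∀ r : ℤ, ∃ b ∈ B, (n : ℤ) ∣ b - r := by
    intro r
    have h1 := hcnt ((r : ZMod N))
    rw [cnt] at h1
    have hpos : 0 < ((A ×ˢ B).filter
        (fun ab => (((n : ℤ) * ab.1 + ab.2 : ℤ) : ZMod N) = (r : ZMod N))).card := by omega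
    obtain ⟨ab, hab⟩ := Finset.card_pos.1 hpos
    rw [Finset.mem_filter] at hab
    obtain ⟨habm, habe⟩ := hab
    have habB : ab.2 ∈ B := (Finset.mem_product.1 habm).2
    refine ⟨ab.2, habB, ?_⟩
    have hmod := (ZMod.intCast_eq_intCast_iff _ _ _).1 habe
    have hdvd : ((N : ℕ) : ℤ) ∣ r - ((n : ℤ) * ab.1 + ab.2) := Int.ModEq.dvd hmod
    have hnN : (n : ℤ) ∣ ((N : ℕ) : ℤ) := by
      rw [hN]; push_cast; exact Dvd.intro_left _ rfl
    have h2 : (n : ℤ) ∣ r - ((n : ℤ) * ab.1 + ab.2) := dvd_trans hnN hdvd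
    have h3 : (n : ℤ) ∣ ab.2 - r := by
      have : ab.2 - r = -(r - ((n : ℤ) * ab.1 + ab.2)) - (n : ℤ) * ab.1 := by ring
      rw [this]
      exact dvd_sub (dvd_neg.2 h2) (Dvd.intro _ rfl)
    exact h3
  -- injectivity of b ↦ b mod n on B
  have himgB : Finset.image (fun b : ℤ => ((b : ℤ) : ZMod n)) B = univ := by
    apply Finset.eq_univ_of_forall
    intro s
    obtain ⟨b, hbB, hbd⟩ := hex ((s.val : ℕ) : ℤ)
    refine Finset.mem_image.2 ⟨b, hbB, ?_⟩
    have : ((b : ℤ) : ZMod n) = (((s.val : ℕ) : ℤ) : ZMod n) := by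
      rw [ZMod.intCast_eq_intCast_iff]
      exact (Int.modEq_iff_dvd.2 (by simpa using hbd)).symm
    rw [this]
    push_cast
    exact ZMod.natCast_rightInverse s
  have hinjB : Set.InjOn (fun b : ℤ => ((b : ℤ) : ZMod n)) B := by
    apply Finset.injOn_of_card_image_eq
    rw [himgB, Finset.card_univ, ZMod.card, hB]
  intro r
  obtain ⟨b, hbB, hbd⟩ := hex r
  refine ⟨b, ⟨hbB, hbd⟩, ?_⟩
  rintro y ⟨hyB, hyd⟩
  apply hinjB hyB hbB
  simp only
  have h1 : ((y : ℤ) : ZMod n) = ((r : ℤ) : ZMod n) := by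
    rw [ZMod.intCast_eq_intCast_iff]
    exact (Int.modEq_iff_dvd.2 (by simpa using hyd)).symm
  have h2 : ((b : ℤ) : ZMod n) = ((r : ℤ) : ZMod n) := by
    rw [ZMod.intCast_eq_intCast_iff]
    exact (Int.modEq_iff_dvd.2 (by simpa using hbd)).symm
  rw [h1, h2]

theorem stmt_6 (m n : ℕ) (hm : 0 < m) (hn : 0 < n) (hmn : Nat.Coprime m n)
    (A B : Finset ℤ) (hA : A.card = m) (hB : B.card = n)
    (hsum : ∀ a ∈ A, ∀ b ∈ B, ∀ a' ∈ A, ∀ b' ∈ B,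
      ((m * n : ℕ) : ℤ) ∣ (a + b) - (a' + b') → a = a' ∧ b = b') :
    (∀ r : ℤ, ∃! a, a ∈ A ∧ (m : ℤ) ∣ a - r) ∧
      (∀ r : ℤ, ∃! b, b ∈ B ∧ (n : ℤ) ∣ b - r) := by
  constructor
  · refine aux n m hn hm hmn.symm B A hB hA ?_
    intro b hb a ha b' hb' a' ha' hdvd
    have hdvd' : ((m * n : ℕ) : ℤ) ∣ (a + b) - (a' + b') := by
      have h1 : ((n * m : ℕ) : ℤ) = ((m * n : ℕ) : ℤ) := by rw [Nat.mul_comm]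
      have h2 : (b + a) - (b' + a') = (a + b) - (a' + b') := by ring
      rwa [h1, h2] at hdvd
    obtain ⟨h1, h2⟩ := hsum a ha b hb a' ha' b' hb' hdvd'
    exact ⟨h2, h1⟩
  · exact aux m n hm hn hmn A B hA hB hsum
end

section
/- Let 0 ≤ k1 ≤ k2 be integers and p a prime with p ≡ 1 (mod k1+k2) and gcd(k1+k2, (p-1)/(k1+k2)) = 1. Let g be a primitive root modulo p and N = {ind_g(j) : j ∈ [-k1,k2], j ≠ 0}, where ind_g(b) is the unique index i ∈ [0, p-2] with g^i ≡ b (mod p). Then a nonsingular perfect B[-k1,k2](p) splitter set exists if and only if N is a complete set of residues modulo k1+k2. -/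
/-- Counting function for dilated tilings. -/
private def tcount {G : Type*} [CommGroup G] [DecidableEq G] (t : ℕ) (A S : Finset G) (x : G) : ℕ :=
  ((A ×ˢ S).filter (fun as : G × G => as.1 ^ t * as.2 = x)).card

private lemma existsUnique_iff_tcount {G : Type*} [CommGroup G] [DecidableEq G]
    (t : ℕ) (A S : Finset G) (x : G) :
    (∃! as : G × G, as.1 ∈ A ∧ as.2 ∈ S ∧ as.1 ^ t * as.2 = x) ↔ tcount t A S x = 1 := by
  rw [tcount, Finset.card_eq_one]
  constructor
  · rintro ⟨a, ⟨ha1, ha2, ha3⟩, hu⟩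
    refine ⟨a, ?_⟩
    ext b
    simp only [Finset.mem_filter, Finset.mem_product, Finset.mem_singleton]
    constructor
    · rintro ⟨⟨h1, h2⟩, h3⟩; exact hu b ⟨h1, h2, h3⟩
    · rintro rfl; exact ⟨⟨ha1, ha2⟩, ha3⟩
  · rintro ⟨a, ha⟩
    have hamem : a ∈ (A ×ˢ S).filter (fun as : G × G => as.1 ^ t * as.2 = x) := by
      rw [ha]; exact Finset.mem_singleton_self a
    simp only [Finset.mem_filter, Finset.mem_product] at hamem
    refine ⟨a, ⟨hamem.1.1, hamem.1.2, hamem.2⟩, ?_⟩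
    rintro b ⟨h1, h2, h3⟩
    have : b ∈ (A ×ˢ S).filter (fun as : G × G => as.1 ^ t * as.2 = x) := by
      simp only [Finset.mem_filter, Finset.mem_product]; exact ⟨⟨h1, h2⟩, h3⟩
    rw [ha, Finset.mem_singleton] at this; exact this

private lemma tcount_sum {G : Type*} [CommGroup G] [Fintype G] [DecidableEq G]
    (t : ℕ) (A S : Finset G) :
    ∑ x : G, tcount t A S x = A.card * S.card := by
  rw [← Finset.card_product]
  exact (Finset.card_eq_sum_card_fiberwise (fun as _ => Finset.mem_univ _)).symm

/-- Convolution in the monoid algebra computes `tcount`. -/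
private lemma conv_apply {G : Type*} [CommGroup G] [DecidableEq G] (R : Type*) [CommSemiring R]
    (t : ℕ) (A S : Finset G) (x : G) :
    (((∑ a ∈ A, MonoidAlgebra.single (a ^ t) (1 : R)) * (∑ s ∈ S, MonoidAlgebra.single s 1) :
      MonoidAlgebra R G)).coeff x = (tcount t A S x : R) := by
  rw [Finset.sum_mul_sum]
  have : ∀ a ∈ A, ∀ s ∈ S, MonoidAlgebra.single (a ^ t) (1 : R) * MonoidAlgebra.single s 1
      = MonoidAlgebra.single (a ^ t * s) 1 := by
    intro a _ s _; rw [MonoidAlgebra.single_mul_single, one_mul]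
  rw [Finset.sum_congr rfl (fun a ha => Finset.sum_congr rfl (fun s hs => this a ha s hs))]
  classical
  have happ : (∑ a ∈ A, ∑ s ∈ S, MonoidAlgebra.single (a ^ t * s) (1 : R)).coeff x
      = ∑ a ∈ A, ∑ s ∈ S, (if a ^ t * s = x then (1 : R) else 0) := by
    rw [MonoidAlgebra.coeff_sum, Finsupp.finset_sum_apply]
    refine Finset.sum_congr rfl (fun a _ => ?_)
    rw [MonoidAlgebra.coeff_sum, Finsupp.finset_sum_apply]
    refine Finset.sum_congr rfl (fun s _ => ?_)
    rw [MonoidAlgebra.coeff_single]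
    exact Finsupp.single_apply
  rw [happ, ← Finset.sum_product']
  rw [Finset.sum_boole]
  rfl

private lemma mul_allones {G : Type*} [CommGroup G] [Fintype G] [DecidableEq G]
    (R : Type*) [CommSemiring R] (A : Finset G) :
    ((∑ a ∈ A, MonoidAlgebra.single a (1 : R)) * (∑ y : G, MonoidAlgebra.single y 1) :
        MonoidAlgebra R G)
      = (A.card : R) • (∑ y : G, MonoidAlgebra.single y 1) := by
  rw [Finset.sum_mul_sum]
  have h1 : ∀ a : G, (∑ y : G, (MonoidAlgebra.single a (1:R) * MonoidAlgebra.single y 1) :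
      MonoidAlgebra R G) = ∑ y : G, MonoidAlgebra.single y 1 := by
    intro a
    have := Fintype.sum_equiv (Equiv.mulLeft a)
      (fun y => (MonoidAlgebra.single (a * y) (1:R) : MonoidAlgebra R G))
      (fun y => (MonoidAlgebra.single y (1:R) : MonoidAlgebra R G)) (fun y => rfl)
    calc (∑ y : G, (MonoidAlgebra.single a (1:R) * MonoidAlgebra.single y 1) : MonoidAlgebra R G)
        = ∑ y : G, (MonoidAlgebra.single (a * y) (1:R) : MonoidAlgebra R G) := by
          refine Finset.sum_congr rfl (fun y _ => ?_)
          rw [MonoidAlgebra.single_mul_single, one_mul]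
      _ = _ := this
  rw [Finset.sum_congr rfl (fun a _ => h1 a), Finset.sum_const]
  exact (Nat.cast_smul_eq_nsmul R _ _).symm

private lemma pow_mul_allones {G : Type*} [CommGroup G] [Fintype G] [DecidableEq G]
    (R : Type*) [CommSemiring R] (A : Finset G) (k : ℕ) :
    (((∑ a ∈ A, MonoidAlgebra.single a (1 : R)) ^ k) * (∑ y : G, MonoidAlgebra.single y 1) :
        MonoidAlgebra R G)
      = ((A.card : R) ^ k) • (∑ y : G, MonoidAlgebra.single y 1) := by
  induction k with
  | zero => simp
  | succ k ih =>
    rw [pow_succ, mul_assoc, mul_allones, Algebra.mul_smul_comm, ih, smul_smul, pow_succ]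
    ring_nf

/-- Core lemma: a tiling can be dilated by a prime not dividing `|A|`. -/
private lemma prime_dilate {G : Type*} [CommGroup G] [Fintype G] [DecidableEq G]
    {A S : Finset G} {q : ℕ} (hq : q.Prime) (hA : ¬ q ∣ A.card)
    (hT : ∀ x : G, ∃! as : G × G, as.1 ∈ A ∧ as.2 ∈ S ∧ as.1 ^ 1 * as.2 = x) :
    ∀ x : G, ∃! as : G × G, as.1 ∈ A ∧ as.2 ∈ S ∧ as.1 ^ q * as.2 = x := by
  haveI : Fact q.Prime := ⟨hq⟩
  have hc1 : ∀ x : G, tcount 1 A S x = 1 := fun x => (existsUnique_iff_tcount 1 A S x).mp (hT x)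
  have hcardG : A.card * S.card = Fintype.card G := by
    rw [← tcount_sum 1 A S]
    simp [hc1, Finset.card_univ]
  -- monoid algebra over ZMod q
  set R := ZMod q
  set fA : MonoidAlgebra R G := ∑ a ∈ A, MonoidAlgebra.single a 1 with hfA
  set U : MonoidAlgebra R G := ∑ y : G, MonoidAlgebra.single y 1 with hU
  have hUapp : ∀ x : G, U.coeff x = 1 := by
    intro x
    rw [hU, MonoidAlgebra.coeff_sum, Finsupp.finset_sum_apply]
    rw [Finset.sum_congr rfl (fun y (_ : y ∈ Finset.univ) =>
      (MonoidAlgebra.coeff_single_apply : (MonoidAlgebra.single y (1:R)).coeff x = _))]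
    simp
  have hfA1 : fA = ∑ a ∈ A, MonoidAlgebra.single (a ^ 1) 1 := by
    simp [hfA]
  set fS : MonoidAlgebra R G := ∑ s ∈ S, MonoidAlgebra.single s 1 with hfS'
  haveI : CharP (MonoidAlgebra R G) q := by
    refine charP_of_injective_ringHom (f := algebraMap R (MonoidAlgebra R G)) ?_ q
    intro a b h
    have := congrArg (fun f : MonoidAlgebra R G => f.coeff 1) h
    simpa [MonoidAlgebra.coe_algebraMap, MonoidAlgebra.coeff_single_apply] using this
  haveI : ExpChar (MonoidAlgebra R G) q := ExpChar.prime hq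
  have hfS : fA * fS = U := by
    ext x
    rw [hfS', hfA1, conv_apply R 1 A S x, hc1 x, Nat.cast_one, hUapp x]
  have hAcast : (A.card : R) ≠ 0 := by
    rw [Ne, ZMod.natCast_eq_zero_iff]; exact hA
  have hkey : ∀ x : G, (tcount q A S x : R) = 1 := by
    intro x
    have hfrob : (∑ a ∈ A, MonoidAlgebra.single (a ^ q) (1:R) : MonoidAlgebra R G) = fA ^ q := by
      rw [hfA, sum_pow_char]
      refine Finset.sum_congr rfl (fun a _ => ?_)
      rw [MonoidAlgebra.single_pow, one_pow]
    have h2 : (∑ a ∈ A, MonoidAlgebra.single (a ^ q) (1:R) : MonoidAlgebra R G) * fS = U := by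
      rw [hfrob]
      have hq1 : q = (q - 1) + 1 := (Nat.succ_pred_eq_of_pos hq.pos).symm
      calc fA ^ q * fS = fA ^ (q-1) * (fA * fS) := by
            rw [← mul_assoc, ← pow_succ, ← hq1]
        _ = fA ^ (q-1) * U := by rw [hfS]
        _ = ((A.card : R) ^ (q-1)) • U := pow_mul_allones R A (q-1)
        _ = U := by rw [ZMod.pow_card_sub_one_eq_one hAcast, one_smul]
    have h3 := conv_apply R q A S x
    rw [← hfS'] at h3
    rw [← h3, h2, hUapp x]
  -- deduce exact count 1
  have hge : ∀ x : G, 1 ≤ tcount q A S x := by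
    intro x
    rcases Nat.eq_zero_or_pos (tcount q A S x) with h0 | h1
    · have := hkey x; rw [h0] at this; simp at this
    · exact h1
  have hsum : ∑ x : G, tcount q A S x = ∑ x : G, 1 := by
    rw [tcount_sum q A S, hcardG]; simp
  have hall : ∀ x ∈ (Finset.univ : Finset G), 1 = tcount q A S x :=
    (Finset.sum_eq_sum_iff_of_le (fun x _ => hge x)).mp (by rw [hsum])
  intro x
  exact (existsUnique_iff_tcount q A S x).mpr ((hall x (Finset.mem_univ x)).symm)

/-- Iterated dilation: a tiling can be dilated by any `t ≥ 1` coprime to `|A|`. -/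
private lemma dilate_coprime {G : Type*} [CommGroup G] [Fintype G] [DecidableEq G]
    {A S : Finset G}
    (hT : ∀ x : G, ∃! as : G × G, as.1 ∈ A ∧ as.2 ∈ S ∧ as.1 * as.2 = x) :
    ∀ t : ℕ, 1 ≤ t → Nat.Coprime t A.card →
      ∀ x : G, ∃! as : G × G, as.1 ∈ A ∧ as.2 ∈ S ∧ as.1 ^ t * as.2 = x := by
  intro t
  induction t using Nat.strong_induction_on with
  | _ t ih =>
    intro ht1 hco
    rcases eq_or_lt_of_le ht1 with h1 | h2
    · simpa [← h1] using hT
    · -- t ≥ 2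
      set q := t.minFac with hqdef
      have hq : q.Prime := Nat.minFac_prime (by omega)
      set t' := t / q with ht'def
      have htq : t = q * t' := by
        rw [ht'def, hqdef]; exact (Nat.mul_div_cancel' (Nat.minFac_dvd t)).symm
      have ht'pos : 1 ≤ t' := Nat.one_le_div_iff hq.pos |>.mpr (Nat.minFac_le (by omega))
      have ht'lt : t' < t := by
        have := hq.two_le
        calc t' = t / q := rfl
          _ < t := Nat.div_lt_self (by omega) (by omega)
      have hco' : Nat.Coprime t' A.card :=
        Nat.Coprime.coprime_dvd_left ⟨q, by rw [htq, mul_comm]⟩ hco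
      have hT' := ih t' ht'lt ht'pos hco'
      -- injectivity of a ↦ a ^ t' on A
      have hSne : S.Nonempty := by
        obtain ⟨as, ⟨-, h2, -⟩, -⟩ := hT' 1
        exact ⟨as.2, h2⟩
      obtain ⟨s₀, hs₀⟩ := hSne
      have hinj : ∀ a₁ ∈ A, ∀ a₂ ∈ A, a₁ ^ t' = a₂ ^ t' → a₁ = a₂ := by
        intro a₁ h₁ a₂ h₂ he
        obtain ⟨w, -, hu⟩ := hT' (a₁ ^ t' * s₀)
        have e1 := hu (a₁, s₀) ⟨h₁, hs₀, rfl⟩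
        have e2 := hu (a₂, s₀) ⟨h₂, hs₀, by rw [← he]⟩
        have := e1.trans e2.symm
        exact congrArg Prod.fst this
      -- the dilated set A'
      set A' := A.image (fun a => a ^ t') with hA'def
      have hcardA' : A'.card = A.card := Finset.card_image_of_injOn (fun a ha b hb => hinj a ha b hb)
      have hTA' : ∀ x : G, ∃! as : G × G, as.1 ∈ A' ∧ as.2 ∈ S ∧ as.1 ^ 1 * as.2 = x := by
        intro x
        obtain ⟨⟨a, s⟩, ⟨ha, hs, he⟩, hu⟩ := hT' x
        refine ⟨(a ^ t', s), ⟨Finset.mem_image_of_mem _ ha, hs, by simpa using he⟩, ?_⟩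
        rintro ⟨b, s'⟩ ⟨hb, hs', he'⟩
        obtain ⟨a', ha', rfl⟩ := Finset.mem_image.mp hb
        have := hu (a', s') ⟨ha', hs', by simpa using he'⟩
        rw [Prod.ext_iff] at this ⊢
        exact ⟨congrArg (· ^ t') this.1, this.2⟩
      have hqA : ¬ q ∣ A'.card := by
        rw [hcardA']
        intro hdvd
        have : q ∣ Nat.gcd t A.card := Nat.dvd_gcd (Nat.minFac_dvd t) hdvd
        rw [Nat.Coprime] at hco
        rw [hco] at this
        have := Nat.dvd_one.mp this
        have := hq.one_lt
        omega
      have hTq := prime_dilate hq hqA hTA'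
      intro x
      obtain ⟨⟨b, s⟩, ⟨hb, hs, he⟩, hu⟩ := hTq x
      obtain ⟨a, ha, rfl⟩ := Finset.mem_image.mp hb
      refine ⟨(a, s), ⟨ha, hs, by rw [htq, mul_comm q t', pow_mul]; exact he⟩, ?_⟩
      rintro ⟨a', s'⟩ ⟨ha', hs', he'⟩
      have := hu (a' ^ t', s') ⟨Finset.mem_image_of_mem _ ha', hs', by
        rw [← pow_mul, mul_comm t' q, ← htq]; exact he'⟩
      rw [Prod.ext_iff] at this ⊢
      exact ⟨hinj a' ha' a ha this.1, this.2⟩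



theorem stmt_7 (k1 k2 p : ℕ) (hk : k1 ≤ k2) (hp : p.Prime)
    (hmod : p % (k1 + k2) = 1)
    (hco : Nat.Coprime (k1 + k2) ((p - 1) / (k1 + k2)))
    (g : ZMod p) (hg : IsPrimitiveRoot g (p - 1)) :
    (∃ B : Finset (ZMod p), IsPerfectSplitter k1 k2 p B ∧
        Nat.Coprime p (Nat.factorial k2)) ↔
      (∀ c : ℕ, c < k1 + k2 →
        ∃! j : ℤ, j ∈ (Finset.Icc (-(k1 : ℤ)) (k2 : ℤ)).erase 0 ∧
          ∃ i : ℕ, i ≤ p - 2 ∧ g ^ i = (j : ZMod p) ∧ i % (k1 + k2) = c) := by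
  classical
  haveI : Fact p.Prime := ⟨hp⟩
  set m := k1 + k2 with hmdef
  set N := p - 1 with hNdef
  set T := (Finset.Icc (-(k1 : ℤ)) (k2 : ℤ)).erase 0 with hTdef
  have hp2 : 2 ≤ p := hp.two_le
  have hm2 : 2 ≤ m := by
    rcases Nat.lt_or_ge m 2 with h | h
    · interval_cases m
      · rw [Nat.mod_zero] at hmod; omega
      · rw [Nat.mod_one] at hmod; omega
    · exact h
  have hNpos : 1 ≤ N := by omega
  have hmdvd : m ∣ N := by
    have := Nat.div_add_mod p m
    exact ⟨p / m, by omega⟩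
  set n := N / m with hndef
  have hmn : m * n = N := Nat.mul_div_cancel' hmdvd
  have hnpos : 1 ≤ n := by
    rcases Nat.eq_zero_or_pos n with h | h
    · rw [h, Nat.mul_zero] at hmn; omega
    · exact h
  have hmN : m ≤ N := Nat.le_of_dvd (by omega) hmdvd
  have hk2 : 1 ≤ k2 := by omega
  have hk2p : k2 < p := by omega
  -- g is nonzero, of order N
  have hg0 : g ≠ 0 := by
    intro h
    have h1 : g ^ N = 1 := hg.pow_eq_one
    rw [h, zero_pow (by omega)] at h1
    exact zero_ne_one h1
  have horder : orderOf g = N := hg.eq_orderOf.symm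
  have hgu : IsUnit g := isUnit_iff_ne_zero.mpr hg0
  set gu : (ZMod p)ˣ := hgu.unit with hgudef
  have hguval : (gu : ZMod p) = g := IsUnit.unit_spec hgu
  have hguord : orderOf gu = N := by
    rw [← horder, ← hguval, orderOf_units]
  -- every unit is a power of gu
  have hzp : ∀ v : (ZMod p)ˣ, ∃ i : ℕ, i < N ∧ gu ^ i = v := by
    intro v
    have hcard : Fintype.card (ZMod p)ˣ = N := by rw [ZMod.card_units]
    have htop : Subgroup.zpowers gu = ⊤ := by
      apply Subgroup.eq_top_of_card_eq
      rw [Nat.card_zpowers, hguord, Nat.card_eq_fintype_card, hcard]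
    have hv : v ∈ Subgroup.zpowers gu := htop ▸ Subgroup.mem_top v
    have hv2 : v ∈ Submonoid.powers gu := by rwa [mem_powers_iff_mem_zpowers]
    obtain ⟨i, hi⟩ := hv2
    refine ⟨i % N, Nat.mod_lt _ (by omega), ?_⟩
    rw [← hguord, pow_mod_orderOf]
    exact hi
  have hlog : ∀ x : ZMod p, x ≠ 0 → ∃ i : ℕ, i < N ∧ g ^ i = x := by
    intro x hx
    obtain ⟨i, hi, he⟩ := hzp (isUnit_iff_ne_zero.mpr hx).unit
    refine ⟨i, hi, ?_⟩
    rw [← hguval, ← Units.val_pow_eq_pow_val, he, IsUnit.unit_spec]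
  have huniq : ∀ i j : ℕ, i < N → j < N → g ^ i = g ^ j → i = j := by
    intro i j hi hj he
    have h1 : gu ^ i = gu ^ j := by
      apply Units.ext
      rw [Units.val_pow_eq_pow_val, Units.val_pow_eq_pow_val, hguval]
      exact he
    have h2 := pow_eq_pow_iff_modEq.mp h1
    rw [hguord] at h2
    simpa [Nat.ModEq, Nat.mod_eq_of_lt hi, Nat.mod_eq_of_lt hj] using h2
  choose! ind hindlt hindpow using hlog
  -- facts about T
  have hTmem : ∀ j ∈ T, (j : ZMod p) ≠ 0 := by
    intro j hj
    rw [hTdef, Finset.mem_erase, Finset.mem_Icc] at hj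
    intro h
    have hdvd := (ZMod.intCast_zmod_eq_zero_iff_dvd j p).mp h
    have : j = 0 := by
      apply Int.eq_zero_of_abs_lt_dvd hdvd
      rw [abs_lt]
      constructor
      · have : (k1 : ℤ) < p := by exact_mod_cast (by omega : k1 < p)
        omega
      · have : (k2 : ℤ) < p := by exact_mod_cast hk2p
        omega
    exact hj.1 this
  have hTinj : ∀ j ∈ T, ∀ j' ∈ T, (j : ZMod p) = (j' : ZMod p) → j = j' := by
    intro j hj j' hj' he
    rw [hTdef, Finset.mem_erase, Finset.mem_Icc] at hj hj'
    have h0 : ((j - j' : ℤ) : ZMod p) = 0 := by push_cast; rw [he]; ring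
    have hdvd := (ZMod.intCast_zmod_eq_zero_iff_dvd _ p).mp h0
    have : j - j' = 0 := by
      apply Int.eq_zero_of_abs_lt_dvd hdvd
      rw [abs_lt]
      have h1 : (k1 : ℤ) + k2 < p := by exact_mod_cast (by omega : k1 + k2 < p)
      omega
    omega
  have hTcard : T.card = m := by
    rw [hTdef, Finset.card_erase_of_mem (by
      rw [Finset.mem_Icc]
      constructor
      · simp
      · exact_mod_cast Nat.zero_le k2), Int.card_Icc]
    have : ((k2 : ℤ) + 1 - -(k1 : ℤ)).toNat = k1 + k2 + 1 := by omega
    omega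
  -- ========== direction: RHS -> existence ==========
  have hdir2 : (∀ c : ℕ, c < m →
        ∃! j : ℤ, j ∈ T ∧
          ∃ i : ℕ, i ≤ p - 2 ∧ g ^ i = (j : ZMod p) ∧ i % m = c) →
      (∃ B : Finset (ZMod p), IsPerfectSplitter k1 k2 p B ∧
        Nat.Coprime p (Nat.factorial k2)) := by
    intro hRHS
    have hgpow0 : ∀ i : ℕ, g ^ i ≠ 0 := fun i => pow_ne_zero i hg0
    refine ⟨(Finset.range n).image (fun i => g ^ (m * i)), ⟨⟨?_, ?_⟩, ?_⟩, ?_⟩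
    · -- card of bStar
      intro b hb
      obtain ⟨i, hi, rfl⟩ := Finset.mem_image.mp hb
      rw [bStar, ← hTdef]
      rw [Finset.card_image_of_injOn, hTcard]
      intro j hj j' hj' he
      exact hTinj j hj j' hj' (mul_left_cancel₀ (hgpow0 _) he)
    · -- pairwise disjoint
      intro b hb b' hb' hne
      rw [Finset.mem_coe] at hb hb'
      obtain ⟨i, hi, rfl⟩ := Finset.mem_image.mp hb
      obtain ⟨i', hi', rfl⟩ := Finset.mem_image.mp hb'
      rw [Finset.mem_range] at hi hi'
      rw [Finset.disjoint_left]
      intro x hx hx'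
      rw [bStar, ← hTdef, Finset.mem_image] at hx hx'
      obtain ⟨j, hj, hje⟩ := hx
      obtain ⟨j', hj', hje'⟩ := hx'
      -- discrete logs of j, j'
      have hj0 := hTmem j hj
      have hj0' := hTmem j' hj'
      set α := ind ((j : ZMod p)) with hαdef
      set α' := ind ((j' : ZMod p)) with hα'def
      have hα1 : α < N := hindlt _ hj0
      have hα2 : g ^ α = (j : ZMod p) := hindpow _ hj0
      have hα1' : α' < N := hindlt _ hj0'
      have hα2' : g ^ α' = (j' : ZMod p) := hindpow _ hj0'
      have hkey : g ^ (m * i + α) = g ^ (m * i' + α') := by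
        rw [pow_add, pow_add, hα2, hα2', hje, hje']
      have hmodN : (m * i + α) % N = (m * i' + α') % N := by
        have h1 : gu ^ (m * i + α) = gu ^ (m * i' + α') := by
          apply Units.ext
          rw [Units.val_pow_eq_pow_val, Units.val_pow_eq_pow_val, hguval]
          exact hkey
        have h2 := pow_eq_pow_iff_modEq.mp h1
        rwa [hguord] at h2
      have hmodm : α % m = α' % m := by
        have h3 : (m * i + α) ≡ (m * i' + α') [MOD m] :=
          Nat.ModEq.of_dvd hmdvd hmodN
        calc α % m = (m * i + α) % m := (Nat.mul_add_mod m i α).symm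
          _ = (m * i' + α') % m := h3
          _ = α' % m := Nat.mul_add_mod m i' α' 
      -- use uniqueness in hRHS to show j = j'
      have hjj' : j = j' := by
        obtain ⟨j₀, hj₀, hj₀u⟩ := hRHS (α % m) (Nat.mod_lt _ (by omega))
        have e1 : j = j₀ := hj₀u j ⟨hj, α, by omega, hα2, rfl⟩
        have e2 : j' = j₀ := hj₀u j' ⟨hj', α', by omega, hα2', hmodm.symm⟩
        rw [e1, e2]
      -- hence the b's are equal, contradiction
      have hαα : α = α' := by rw [hαdef, hα'def, hjj']
      have hee : g ^ (m * i) = g ^ (m * i') := by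
        have h5 : g ^ (m * i) * g ^ α = g ^ (m * i') * g ^ α := by
          rw [← pow_add, ← pow_add, hkey, hαα]
        exact mul_right_cancel₀ (hgpow0 α) h5
      exact hne hee
    · -- perfect count
      rw [Finset.card_image_of_injOn, Finset.card_range, hmn]
      intro i hi i' hi' he
      rw [Finset.mem_coe, Finset.mem_range] at hi hi'
      have h1 : gu ^ (m * i) = gu ^ (m * i') := by
        apply Units.ext
        rw [Units.val_pow_eq_pow_val, Units.val_pow_eq_pow_val, hguval]
        exact he
      have h2 := pow_eq_pow_iff_modEq.mp h1
      rw [hguord] at h2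
      have hlt : m * i < N := by
        calc m * i < m * n := mul_lt_mul_of_pos_left hi (by omega)
          _ = N := hmn
      have hlt' : m * i' < N := by
        calc m * i' < m * n := mul_lt_mul_of_pos_left hi' (by omega)
          _ = N := hmn
      have : m * i = m * i' := by
        simpa [Nat.ModEq, Nat.mod_eq_of_lt hlt, Nat.mod_eq_of_lt hlt'] using h2
      exact Nat.eq_of_mul_eq_mul_left (by omega) this
    · -- coprime to factorial
      exact (Nat.Prime.coprime_iff_not_dvd hp).mpr
        (fun hdvd => absurd ((Nat.Prime.dvd_factorial hp).mp hdvd) (by omega))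
  -- ========== direction: existence -> RHS ==========
  have hdir1 : (∃ B : Finset (ZMod p), IsPerfectSplitter k1 k2 p B ∧
        Nat.Coprime p (Nat.factorial k2)) →
      (∀ c : ℕ, c < m →
        ∃! j : ℤ, j ∈ T ∧
          ∃ i : ℕ, i ≤ p - 2 ∧ g ^ i = (j : ZMod p) ∧ i % m = c) := by
    rintro ⟨B, ⟨⟨h1, h2⟩, h3⟩, -⟩
    -- elements of B are nonzero
    have hB0 : ∀ b ∈ B, b ≠ 0 := by
      intro b hb hb0
      have hcard := h1 b hb
      have hsub : bStar k1 k2 p b ⊆ {0} := by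
        intro x hx
        rw [bStar, Finset.mem_image] at hx
        obtain ⟨j, -, hj⟩ := hx
        rw [Finset.mem_singleton, ← hj, hb0, zero_mul]
      have := Finset.card_le_card hsub
      rw [hcard, Finset.card_singleton] at this
      omega
    have hBcard : B.card = n := by
      have : m * B.card = m * n := by rw [hmn]; exact h3
      exact Nat.eq_of_mul_eq_mul_left (by omega) this
    -- the set S of residues
    set Sfin : Finset (ZMod p) := T.image (fun j : ℤ => (j : ZMod p)) with hSdef
    have hScard : Sfin.card = m := by
      rw [hSdef, Finset.card_image_of_injOn (fun a ha b hb => hTinj a ha b hb), hTcard]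
    have hS0 : ∀ s ∈ Sfin, s ≠ 0 := by
      intro s hs
      rw [hSdef, Finset.mem_image] at hs
      obtain ⟨j, hj, rfl⟩ := hs
      exact hTmem j hj
    have hbStar : ∀ b : ZMod p, bStar k1 k2 p b = Sfin.image (fun s => b * s) := by
      intro b
      rw [hSdef, bStar, Finset.image_image, ← hTdef]
      rfl
    -- exact cover of the nonzero elements
    have hcover : ∀ x : ZMod p, x ≠ 0 →
        ∃! bs : ZMod p × ZMod p, bs.1 ∈ B ∧ bs.2 ∈ Sfin ∧ bs.1 * bs.2 = x := by
      have hW : B.biUnion (bStar k1 k2 p) = Finset.univ.erase (0 : ZMod p) := by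
        apply Finset.eq_of_subset_of_card_le
        · intro x hx
          rw [Finset.mem_biUnion] at hx
          obtain ⟨b, hb, hxb⟩ := hx
          rw [hbStar, Finset.mem_image] at hxb
          obtain ⟨s, hs, rfl⟩ := hxb
          exact Finset.mem_erase.mpr ⟨mul_ne_zero (hB0 b hb) (hS0 s hs), Finset.mem_univ _⟩
        · rw [Finset.card_erase_of_mem (Finset.mem_univ _), Finset.card_univ, ZMod.card,
            Finset.card_biUnion (fun b hb b' hb' hne => h2 hb hb' hne)]
          have : ∀ b ∈ B, (bStar k1 k2 p b).card = m := h1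
          rw [Finset.sum_congr rfl this, Finset.sum_const, smul_eq_mul, hBcard]
          rw [mul_comm, hmn]
      intro x hx
      have hxW : x ∈ B.biUnion (bStar k1 k2 p) := by
        rw [hW]; exact Finset.mem_erase.mpr ⟨hx, Finset.mem_univ _⟩
      rw [Finset.mem_biUnion] at hxW
      obtain ⟨b, hb, hxb⟩ := hxW
      rw [hbStar, Finset.mem_image] at hxb
      obtain ⟨s, hs, hbs⟩ := hxb
      refine ⟨(b, s), ⟨hb, hs, hbs⟩, ?_⟩
      rintro ⟨b', s'⟩ ⟨hb', hs', hbs'⟩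
      rcases eq_or_ne b' b with rfl | hne
      · have : s' = s := mul_left_cancel₀ (hB0 b' hb') (by rw [hbs, hbs'])
        rw [this]
      · exfalso
        have hd := h2 hb' hb hne
        simp only [Finset.disjoint_left] at hd
        apply hd (a := x)
        · rw [hbStar, Finset.mem_image]; exact ⟨s', hs', hbs'⟩
        · rw [hbStar, Finset.mem_image]; exact ⟨s, hs, hbs⟩
    -- transfer to the unit group
    set A : Finset (ZMod p)ˣ := Finset.univ.filter (fun u : (ZMod p)ˣ => (u : ZMod p) ∈ B) with hAdef
    set Su : Finset (ZMod p)ˣ := Finset.univ.filter (fun u : (ZMod p)ˣ => (u : ZMod p) ∈ Sfin) with hSudef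
    have hmemA : ∀ u : (ZMod p)ˣ, u ∈ A ↔ (u : ZMod p) ∈ B := by
      intro u; rw [hAdef, Finset.mem_filter]; simp
    have hmemSu : ∀ u : (ZMod p)ˣ, u ∈ Su ↔ (u : ZMod p) ∈ Sfin := by
      intro u; rw [hSudef, Finset.mem_filter]; simp
    have hAcard : A.card = n := by
      rw [← hBcard]
      apply Finset.card_bij (fun (u : (ZMod p)ˣ) _ => (u : ZMod p))
      · intro u hu; exact (hmemA u).mp hu
      · intro u hu u' hu' he; exact Units.ext he
      · intro b hb
        have hbu : IsUnit b := isUnit_iff_ne_zero.mpr (hB0 b hb)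
        exact ⟨hbu.unit, (hmemA _).mpr (by rw [IsUnit.unit_spec]; exact hb),
          (IsUnit.unit_spec hbu).symm⟩
    have hTile : ∀ x : (ZMod p)ˣ, ∃! as : (ZMod p)ˣ × (ZMod p)ˣ,
        as.1 ∈ A ∧ as.2 ∈ Su ∧ as.1 * as.2 = x := by
      intro x
      obtain ⟨⟨b, s⟩, ⟨hb, hs, hbs⟩, hu⟩ := hcover (x : ZMod p) (Units.ne_zero x)
      have hbu : IsUnit b := isUnit_iff_ne_zero.mpr (hB0 b hb)
      have hsu : IsUnit s := isUnit_iff_ne_zero.mpr (hS0 s hs)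
      refine ⟨(hbu.unit, hsu.unit), ⟨(hmemA _).mpr (by rw [IsUnit.unit_spec]; exact hb),
        (hmemSu _).mpr (by rw [IsUnit.unit_spec]; exact hs),
        Units.ext (by rw [Units.val_mul, IsUnit.unit_spec, IsUnit.unit_spec]; exact hbs)⟩, ?_⟩
      rintro ⟨u, v⟩ ⟨hu1, hv1, huv⟩
      have := hu ((u : ZMod p), (v : ZMod p)) ⟨(hmemA u).mp hu1, (hmemSu v).mp hv1,
        by rw [← Units.val_mul, huv]⟩
      rw [Prod.ext_iff] at this ⊢
      obtain ⟨e1, e2⟩ := this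
      constructor
      · apply Units.ext; rw [IsUnit.unit_spec]; exact e1
      · apply Units.ext; rw [IsUnit.unit_spec]; exact e2
    -- dilate the tiling by m
    have hcoA : Nat.Coprime m A.card := by rw [hAcard]; exact hco
    have hTm := dilate_coprime hTile m (by omega) hcoA
    -- surjectivity of index residues
    have hsurj : ∀ c : ℕ, c < m → ∃ j ∈ T, ind ((j : ZMod p)) % m = c := by
      intro c hc
      obtain ⟨⟨a, s⟩, ⟨haA, hsS, he⟩, -⟩ := hTm (gu ^ c)
      obtain ⟨α, hα1, hα2⟩ := hzp a
      have hsfin : (s : ZMod p) ∈ Sfin := (hmemSu s).mp hsS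
      obtain ⟨j, hjT, hjs⟩ := Finset.mem_image.mp (hSdef ▸ hsfin)
      set σ := ind ((j : ZMod p)) with hσdef
      have hj0 := hTmem j hjT
      have hσ1 : σ < N := hindlt _ hj0
      have hσ2 : g ^ σ = (j : ZMod p) := hindpow _ hj0
      -- unit equation
      have hsunit : gu ^ σ = s := by
        apply Units.ext
        rw [Units.val_pow_eq_pow_val, hguval, hσ2, hjs]
      have hkey : gu ^ (α * m + σ) = gu ^ c := by
        rw [pow_add, pow_mul, hα2, hsunit]
        exact he
      have hmodN := pow_eq_pow_iff_modEq.mp hkey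
      rw [hguord] at hmodN
      have hmodm : (α * m + σ) % m = c % m := Nat.ModEq.of_dvd hmdvd hmodN
      rw [add_comm, Nat.add_mul_mod_self_right, Nat.mod_eq_of_lt hc] at hmodm
      exact ⟨j, hjT, hmodm⟩
    -- injectivity via cardinality
    have hmaps : ∀ (j : ℤ), j ∈ T → ind ((j : ZMod p)) % m ∈ Finset.range m := by
      intro j hj; rw [Finset.mem_range]; exact Nat.mod_lt _ (by omega)
    have hinj := Finset.inj_on_of_surj_on_of_card_le
      (s := T) (t := Finset.range m) (fun j _ => ind ((j : ZMod p)) % m)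
      (fun j hj => hmaps j hj)
      (fun c hc => by
        obtain ⟨j, hjT, hjc⟩ := hsurj c (Finset.mem_range.mp hc)
        exact ⟨j, hjT, hjc⟩)
      (by rw [hTcard, Finset.card_range])
    -- conclude
    intro c hc
    obtain ⟨j, hjT, hjc⟩ := hsurj c hc
    have hj0 := hTmem j hjT
    refine ⟨j, ⟨hjT, ind ((j : ZMod p)), by have := hindlt _ hj0; omega,
      hindpow _ hj0, hjc⟩, ?_⟩
    rintro j' ⟨hj'T, i', hi'le, hi'pow, hi'mod⟩
    have hj0' := hTmem j' hj'T
    have hieq : i' = ind ((j' : ZMod p)) := by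
      apply huniq i' (ind ((j' : ZMod p))) (by omega) (hindlt _ hj0')
      rw [hi'pow, hindpow _ hj0']
    have : ind ((j' : ZMod p)) % m = ind ((j : ZMod p)) % m := by
      rw [← hieq, hi'mod, hjc]
    exact hinj hj'T hjT this
  exact ⟨hdir1, hdir2⟩
end

section
/- Let p ≡ 7 or 31 (mod 36) be a prime. Then there exists a nonsingular perfect B[-2,4](p) splitter set if and only if 6 is a cubic residue modulo p and neither 2 nor 3 is a cubic residue modulo p. -/
lemma aux_bstar {p : ℕ} (b : ZMod p) :
    bStar 2 4 p b = ((Finset.Icc (-2:ℤ) 4).erase 0).image (fun j : ℤ => b * (j : ZMod p)) := by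
  norm_num [bStar]

lemma aux_cast_ne {p : ℕ} [Fact p.Prime] (hp7 : 7 ≤ p) {n : ℕ} (h1 : 0 < n) (h2 : n ≤ 6) :
    (n : ZMod p) ≠ 0 := by
  intro h
  rw [ZMod.natCast_eq_zero_iff] at h
  have := Nat.le_of_dvd h1 h
  omega

lemma aux_j_ne {p : ℕ} [Fact p.Prime] (hp7 : 7 ≤ p) {j : ℤ}
    (hj : j ∈ (Finset.Icc (-2:ℤ) 4).erase 0) : (j : ZMod p) ≠ 0 := by
  simp only [Finset.mem_erase, Finset.mem_Icc] at hj
  intro h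
  rw [ZMod.intCast_zmod_eq_zero_iff_dvd] at h
  have h' := Int.natAbs_dvd_natAbs.mpr h
  simp only [Int.natAbs_natCast] at h'
  have hpos : 0 < j.natAbs := by omega
  have := Nat.le_of_dvd hpos h'
  omega

lemma aux_int_inj {p : ℕ} [Fact p.Prime] (hp7 : 7 ≤ p) {j j' : ℤ}
    (hj : j ∈ (Finset.Icc (-2:ℤ) 4).erase 0) (hj' : j' ∈ (Finset.Icc (-2:ℤ) 4).erase 0)
    (h : (j : ZMod p) = (j' : ZMod p)) : j = j' := by
  simp only [Finset.mem_erase, Finset.mem_Icc] at hj hj'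
  have hd : ((j - j' : ℤ) : ZMod p) = 0 := by push_cast [h]; ring
  rw [ZMod.intCast_zmod_eq_zero_iff_dvd] at hd
  have h' := Int.natAbs_dvd_natAbs.mpr hd
  simp only [Int.natAbs_natCast] at h'
  rcases Nat.eq_zero_or_pos (j - j').natAbs with h0 | hpos
  · omega
  · have := Nat.le_of_dvd hpos h'
    omega

/-- Euler criterion for cubes, hard direction. -/
lemma aux_cube {p m : ℕ} [Fact p.Prime] (hm3 : 3 * m = p - 1) (y : ZMod p) (hy : y ≠ 0)
    (h : y ^ m = 1) : ∃ x : ZMod p, x ≠ 0 ∧ x ^ 3 = y := by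
  have hm0 : m ≠ 0 := by
    have := (Fact.out : p.Prime).two_le; omega
  obtain ⟨g, hg⟩ := IsCyclic.exists_generator (α := (ZMod p)ˣ)
  have hord : orderOf g = p - 1 := by
    rw [orderOf_eq_card_of_forall_mem_zpowers hg, Nat.card_eq_fintype_card, ZMod.card_units p]
  set u : (ZMod p)ˣ := Units.mk0 y hy with hu
  obtain ⟨k, hk⟩ := mem_powers_iff_mem_zpowers.mpr (hg u)
  have hk' : g ^ k = u := hk
  have hum : u ^ m = 1 := by
    ext
    push_cast
    simpa [hu] using h
  have hgm : g ^ (k * m) = 1 := by rw [pow_mul, hk']; exact hum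
  have hdvd : (p - 1) ∣ k * m := hord ▸ orderOf_dvd_of_pow_eq_one hgm
  obtain ⟨t, ht⟩ := hdvd
  have hk3 : k = 3 * t := by
    have h' : 3 * m * t = (3 * t) * m := by ring
    rw [← hm3, h'] at ht
    exact Nat.eq_of_mul_eq_mul_right (by omega) ht
  refine ⟨((g ^ t : (ZMod p)ˣ) : ZMod p), Units.ne_zero _, ?_⟩
  have hgt : (g ^ t) ^ 3 = u := by rw [← hk', hk3, ← pow_mul, Nat.mul_comm]
  calc ((g ^ t : (ZMod p)ˣ) : ZMod p) ^ 3
      = (((g ^ t) ^ 3 : (ZMod p)ˣ) : ZMod p) := by push_cast; ring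
  _ = y := by rw [hgt]; rfl

/-- 3 is a quadratic nonresidue. -/
lemma aux_three_pow {p : ℕ} [Fact p.Prime] (h3 : p % 3 = 1) (h4 : p % 4 = 3) (hp7 : 7 ≤ p) :
    (3 : ZMod p) ^ (p / 2) = -1 := by
  haveI : Fact (Nat.Prime 3) := ⟨by norm_num⟩
  have hqr := legendreSym.quadratic_reciprocity' (p := 3) (q := p) (by norm_num) (by omega)
  have h3p : legendreSym 3 p = 1 := by
    rw [legendreSym.mod 3 p]
    have h1 : (p : ℤ) % ((3:ℕ) : ℤ) = 1 := by push_cast; omega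
    rw [h1, legendreSym.at_one]
  have hodd : Odd (p / 2) := ⟨p / 4, by omega⟩
  rw [h3p, mul_one, show (3:ℕ)/2 = 1 from rfl, one_mul, hodd.neg_one_pow] at hqr
  have heq := legendreSym.eq_pow p ((3:ℕ):ℤ)
  rw [hqr] at heq
  push_cast at heq
  exact heq.symm

lemma aux_seven : ¬ ((2 : ZMod 7) ^ 2 = 1) := by decide

/-- cube roots of unity: factoring. -/
lemma aux_fac {p : ℕ} [Fact p.Prime] (z : ZMod p) (h : z ^ 3 = 1) :
    z = 1 ∨ z ^ 2 + z + 1 = 0 := by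
  have h' : (z - 1) * (z ^ 2 + z + 1) = 0 := by linear_combination h
  rcases mul_eq_zero.mp h' with h0 | h0
  · left; linear_combination h0
  · right; exact h0

/-- the key "distinct ratios" lemma. -/
lemma aux_key {p m h' : ℕ} [Fact p.Prime] (hp7 : 7 ≤ p) {a s : ZMod p}
    (hmeven : m % 2 = 0) (hhodd : h' % 2 = 1)
    (h2m : (2 : ZMod p) ^ m = a) (h3m : (3 : ZMod p) ^ m = a ^ 2)
    (ha : a ^ 2 + a + 1 = 0)
    (h2h : (2 : ZMod p) ^ h' = s) (hs : s ^ 2 = 1)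
    (h3h : (3 : ZMod p) ^ h' = -1)
    (j j' : ℤ) (hj : j ∈ (Finset.Icc (-2:ℤ) 4).erase 0) (hj' : j' ∈ (Finset.Icc (-2:ℤ) 4).erase 0)
    (hm : (j : ZMod p) ^ m = (j' : ZMod p) ^ m)
    (hh : (j : ZMod p) ^ h' = (j' : ZMod p) ^ h') : j = j' := by
  have h2 : (2 : ZMod p) ≠ 0 := by
    have := aux_cast_ne (p := p) hp7 (n := 2) (by norm_num) (by norm_num); simpa using this
  have h3 : (3 : ZMod p) ≠ 0 := by
    have := aux_cast_ne (p := p) hp7 (n := 3) (by norm_num) (by norm_num); simpa using this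
  have hE : Even m := Nat.even_iff.mpr hmeven
  have hO : Odd h' := Nat.odd_iff.mpr hhodd
  have hN : ¬ ((1 : ZMod p) = -1) := by
    intro h; apply h2; linear_combination h
  have hs0 : s ≠ 0 := by
    intro h; rw [h] at hs; norm_num at hs
  have hS : ¬ (s = -s) := by
    intro h
    have h20 : (2 : ZMod p) * s = 0 := by linear_combination h
    rcases mul_eq_zero.mp h20 with h' | h'
    · exact h2 h'
    · exact hs0 h'
  have hA1 : ¬ (a = 1) := by
    intro h; apply h3; rw [h] at ha; linear_combination ha
  have hA2 : ¬ (a ^ 2 = 1) := by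
    intro h
    have t : a + 2 = 0 := by linear_combination ha - h
    apply h3; linear_combination h - (a - 2) * t
  have hA3 : ¬ (a ^ 2 = a) := by
    intro h
    have t : 2 * a + 1 = 0 := by linear_combination ha - h
    apply h3; linear_combination 4 * ha - (2 * a + 1) * t
  have h4m : (4 : ZMod p) ^ m = a ^ 2 := by
    have h42 : (4 : ZMod p) = 2 ^ 2 := by norm_num
    rw [h42, ← pow_mul, Nat.mul_comm, pow_mul, h2m]
  have h4h : (4 : ZMod p) ^ h' = s ^ 2 := by
    have h42 : (4 : ZMod p) = 2 ^ 2 := by norm_num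
    rw [h42, ← pow_mul, Nat.mul_comm, pow_mul, h2h]
  simp only [Finset.mem_erase, Finset.mem_Icc] at hj hj'
  obtain ⟨hj0, hjl, hjr⟩ := hj
  obtain ⟨hj'0, hj'l, hj'r⟩ := hj'
  interval_cases j <;> interval_cases j' <;> push_cast at hm hh <;>
    simp only [hE.neg_pow, hO.neg_pow, one_pow, h2m, h3m, h4m, h2h, h3h, h4h] at hm hh <;>
    first
    | exact absurd rfl hj0
    | exact absurd rfl hj'0
    | rfl
    | (exfalso; first
        | (apply hA1; first | linear_combination hm | linear_combination -hm)
        | (apply hA2; first | linear_combination hm | linear_combination -hm)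
        | (apply hA3; first | linear_combination hm | linear_combination -hm)
        | (apply hS; first | linear_combination hh | linear_combination -hh)
        | (apply hN; first
            | linear_combination hh
            | linear_combination -hh
            | linear_combination hh - hs
            | linear_combination hs - hh
            | linear_combination -hh - hs
            | linear_combination hh + hs))

/-- evaluation of the `j`-sum. -/
lemma aux_sigma {p : ℕ} [Fact p.Prime] {m : ℕ} (hE : m % 2 = 0) :
    (∑ j ∈ (Finset.Icc (-2:ℤ) 4).erase 0, (j : ZMod p) ^ m)
      = 2 + 2 * (2 : ZMod p) ^ m + (3 : ZMod p) ^ m + ((2 : ZMod p) ^ m) ^ 2 := by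
  have hJ : (Finset.Icc (-2:ℤ) 4).erase 0 = ({-2,-1,1,2,3,4} : Finset ℤ) := by decide
  rw [hJ]
  rw [show ({-2,-1,1,2,3,4} : Finset ℤ)
      = insert (-2) (insert (-1) (insert 1 (insert 2 (insert 3 {4})))) from rfl]
  rw [Finset.sum_insert (by decide), Finset.sum_insert (by decide),
    Finset.sum_insert (by decide), Finset.sum_insert (by decide),
    Finset.sum_insert (by decide), Finset.sum_singleton]
  have hEe : Even m := Nat.even_iff.mpr hE
  push_cast
  rw [hEe.neg_pow, hEe.neg_pow, one_pow]
  have h4 : (4 : ZMod p) = 2 ^ 2 := by norm_num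
  rw [h4, ← pow_mul, Nat.mul_comm 2 m, pow_mul]
  ring

/-- the splitter gives zero products against power sums. -/
lemma aux_partition {p : ℕ} [Fact p.Prime] {B : Finset (ZMod p)} (hp7 : 7 ≤ p)
    (h6 : ∀ b ∈ B, (bStar 2 4 p b).card = 6)
    (hdisj : (B : Set (ZMod p)).Pairwise fun b b' => Disjoint (bStar 2 4 p b) (bStar 2 4 p b'))
    (hcB : 6 * B.card = p - 1) (t : ℕ) (ht0 : 0 < t) (htlt : t < p - 1) :
    (∑ b ∈ B, b ^ t) * (∑ j ∈ (Finset.Icc (-2:ℤ) 4).erase 0, (j : ZMod p) ^ t) = 0 := by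
  classical
  have hb0 : ∀ b ∈ B, b ≠ 0 := by
    intro b hb hbe
    have hc := h6 b hb
    rw [hbe, aux_bstar] at hc
    have h0 : (((Finset.Icc (-2:ℤ) 4).erase 0).image
        (fun j : ℤ => (0 : ZMod p) * (j : ZMod p))) = {0} := by
      ext x
      simp only [Finset.mem_image, Finset.mem_singleton, zero_mul]
      constructor
      · rintro ⟨j, hj, rfl⟩; rfl
      · rintro rfl; exact ⟨1, by decide, rfl⟩
    rw [h0] at hc
    simp at hc
  have hpd : (B : Set (ZMod p)).PairwiseDisjoint (bStar 2 4 p) := hdisj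
  have hUsub : B.biUnion (bStar 2 4 p) ⊆ Finset.univ.erase 0 := by
    intro x hx
    rw [Finset.mem_biUnion] at hx
    obtain ⟨b, hb, hxb⟩ := hx
    rw [aux_bstar, Finset.mem_image] at hxb
    obtain ⟨j, hj, rfl⟩ := hxb
    exact Finset.mem_erase.mpr ⟨mul_ne_zero (hb0 b hb) (aux_j_ne hp7 hj), Finset.mem_univ _⟩
  have hcard : (B.biUnion (bStar 2 4 p)).card = p - 1 := by
    rw [Finset.card_biUnion (fun x hx y hy hxy => hpd hx hy hxy), Finset.sum_congr rfl h6,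
      Finset.sum_const, smul_eq_mul, mul_comm]
    exact hcB
  have hU : B.biUnion (bStar 2 4 p) = Finset.univ.erase 0 := by
    apply Finset.eq_of_subset_of_card_le hUsub
    rw [hcard, Finset.card_erase_of_mem (Finset.mem_univ _), Finset.card_univ, ZMod.card]
  have hL : ∑ x ∈ Finset.univ.erase (0 : ZMod p), x ^ t = 0 := by
    rw [Finset.sum_erase (f := fun x : ZMod p => x ^ t) Finset.univ
      (zero_pow ht0.ne' : (0 : ZMod p) ^ t = 0)]
    exact FiniteField.sum_pow_lt_card_sub_one _ t (by rw [ZMod.card]; exact htlt)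
  have hinj : ∀ b ∈ B, Set.InjOn (fun j : ℤ => b * (j : ZMod p))
      ((Finset.Icc (-2:ℤ) 4).erase 0) := by
    intro b hb
    apply Finset.card_image_iff.mp
    rw [← aux_bstar, h6 b hb]
    decide
  calc (∑ b ∈ B, b ^ t) * (∑ j ∈ (Finset.Icc (-2:ℤ) 4).erase 0, (j : ZMod p) ^ t)
      = ∑ b ∈ B, ∑ j ∈ (Finset.Icc (-2:ℤ) 4).erase 0, (b * (j : ZMod p)) ^ t := by
        rw [Finset.sum_mul]
        refine Finset.sum_congr rfl fun b _ => ?_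
        rw [Finset.mul_sum]
        exact Finset.sum_congr rfl fun j _ => (mul_pow _ _ _).symm
  _ = ∑ b ∈ B, ∑ x ∈ bStar 2 4 p b, x ^ t := by
        refine Finset.sum_congr rfl fun b hb => ?_
        rw [aux_bstar, Finset.sum_image (fun x hx y hy hxy => hinj b hb hx hy hxy)]
  _ = ∑ x ∈ B.biUnion (bStar 2 4 p), x ^ t := (Finset.sum_biUnion hpd).symm
  _ = 0 := by rw [hU]; exact hL

theorem stmt_8 (p : ℕ) (hp : p.Prime) (hmod : p % 36 = 7 ∨ p % 36 = 31) :
    (∃ B : Finset (ZMod p), IsPerfectSplitter 2 4 p B ∧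
        Nat.Coprime p (Nat.factorial 4)) ↔
      ((∃ x : ZMod p, x ≠ 0 ∧ x ^ 3 = 6) ∧
        ¬(∃ x : ZMod p, x ≠ 0 ∧ x ^ 3 = 2) ∧
        ¬(∃ x : ZMod p, x ≠ 0 ∧ x ^ 3 = 3)) := by
  haveI : Fact p.Prime := ⟨hp⟩
  have hple : p % 36 ≤ p := Nat.mod_le p 36
  have hp7 : 7 ≤ p := by omega
  obtain ⟨m, hm3⟩ : ∃ m, 3 * m = p - 1 := ⟨(p - 1) / 3, by omega⟩
  have hmev : m % 2 = 0 := by omega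
  have h2ne : (2 : ZMod p) ≠ 0 := by
    have := aux_cast_ne (p := p) hp7 (n := 2) (by norm_num) (by norm_num); simpa using this
  have h3ne : (3 : ZMod p) ≠ 0 := by
    have := aux_cast_ne (p := p) hp7 (n := 3) (by norm_num) (by norm_num); simpa using this
  have h6ne : (6 : ZMod p) ≠ 0 := by
    have := aux_cast_ne (p := p) hp7 (n := 6) (by norm_num) (by norm_num); simpa using this
  have hcube : ∀ y : ZMod p, y ≠ 0 → ((∃ x : ZMod p, x ≠ 0 ∧ x ^ 3 = y) ↔ y ^ m = 1) := by
    intro y hy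
    constructor
    · rintro ⟨x, hx, rfl⟩
      rw [← pow_mul, hm3, ZMod.pow_card_sub_one_eq_one hx]
    · exact aux_cube hm3 y hy
  have ha3 : ((2 : ZMod p) ^ m) ^ 3 = 1 := by
    rw [← pow_mul, Nat.mul_comm, hm3, ZMod.pow_card_sub_one_eq_one h2ne]
  have hc3 : ((3 : ZMod p) ^ m) ^ 3 = 1 := by
    rw [← pow_mul, Nat.mul_comm, hm3, ZMod.pow_card_sub_one_eq_one h3ne]
  constructor
  · -- forward direction
    rintro ⟨B, ⟨⟨hc6, hdisj⟩, hcB⟩, -⟩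
    have hc6' : ∀ b ∈ B, (bStar 2 4 p b).card = 6 := by
      intro b hb; simpa using hc6 b hb
    have hcB' : 6 * B.card = p - 1 := by simpa using hcB
    -- the counting contradiction
    have hb0 : ∀ b ∈ B, b ≠ 0 := by
      intro b hb hbe
      have hc := hc6' b hb
      rw [hbe, aux_bstar] at hc
      have h0 : (((Finset.Icc (-2:ℤ) 4).erase 0).image
          (fun j : ℤ => (0 : ZMod p) * (j : ZMod p))) = {0} := by
        ext x
        simp only [Finset.mem_image, Finset.mem_singleton, zero_mul]
        constructor
        · rintro ⟨j, hj, rfl⟩; rfl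
        · rintro rfl; exact ⟨1, by decide, rfl⟩
      rw [h0] at hc
      simp at hc
    have contra :
        (2 + 2 * (2 : ZMod p) ^ m + (3 : ZMod p) ^ m + ((2 : ZMod p) ^ m) ^ 2 ≠ 0) →
        (2 + 2 * ((2 : ZMod p) ^ m) ^ 2 + ((3 : ZMod p) ^ m) ^ 2 + (((2 : ZMod p) ^ m) ^ 2) ^ 2 ≠ 0) →
        False := by
      intro hσ1 hσ2
      have h2two : (2 : ZMod p) ^ (2 * m) = ((2 : ZMod p) ^ m) ^ 2 := by
        rw [Nat.mul_comm, pow_mul]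
      have h3two : (3 : ZMod p) ^ (2 * m) = ((3 : ZMod p) ^ m) ^ 2 := by
        rw [Nat.mul_comm, pow_mul]
      have hX : (∑ b ∈ B, b ^ m) = 0 := by
        have h0 := aux_partition hp7 hc6' hdisj hcB' m (by omega) (by omega)
        rw [aux_sigma hmev] at h0
        rcases mul_eq_zero.mp h0 with h | h
        · exact h
        · exact absurd h hσ1
      have hY : (∑ b ∈ B, b ^ (2 * m)) = 0 := by
        have h0 := aux_partition hp7 hc6' hdisj hcB' (2 * m) (by omega) (by omega)
        rw [aux_sigma (by omega), h2two, h3two] at h0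
        rcases mul_eq_zero.mp h0 with h | h
        · exact h
        · exact absurd h hσ2
      classical
      set x0 := (B.filter (fun b => b ^ m = 1)).card with hx0
      have key : ∑ b ∈ B, ((1 : ZMod p) + b ^ m + b ^ (2 * m)) = ((3 * x0 : ℕ) : ZMod p) := by
        rw [← Finset.sum_filter_add_sum_filter_not B (fun b => b ^ m = 1)]
        have e1 : ∀ b ∈ B.filter (fun b => b ^ m = 1),
            (1 : ZMod p) + b ^ m + b ^ (2 * m) = 3 := by
          intro b hb
          simp only [Finset.mem_filter] at hb
          have hb2 : b ^ (2 * m) = (b ^ m) ^ 2 := by rw [Nat.mul_comm, pow_mul]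
          rw [hb2, hb.2]; norm_num
        have e2 : ∀ b ∈ B.filter (fun b => ¬ b ^ m = 1),
            (1 : ZMod p) + b ^ m + b ^ (2 * m) = 0 := by
          intro b hb
          simp only [Finset.mem_filter] at hb
          have hbne : b ≠ 0 := hb0 b hb.1
          have hz3 : (b ^ m) ^ 3 = 1 := by
            rw [← pow_mul, Nat.mul_comm, hm3, ZMod.pow_card_sub_one_eq_one hbne]
          have hb2 : b ^ (2 * m) = (b ^ m) ^ 2 := by rw [Nat.mul_comm, pow_mul]
          rcases aux_fac _ hz3 with h1 | hq
          · exact absurd h1 hb.2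
          · rw [hb2]; linear_combination hq
        rw [Finset.sum_congr rfl e1, Finset.sum_congr rfl e2, Finset.sum_const,
          Finset.sum_const]
        simp only [nsmul_eq_mul, mul_zero, add_zero, ← hx0]
        push_cast
        ring
      have key2 : ∑ b ∈ B, ((1 : ZMod p) + b ^ m + b ^ (2 * m)) = ((B.card : ℕ) : ZMod p) := by
        rw [Finset.sum_add_distrib, Finset.sum_add_distrib, hX, hY, Finset.sum_const]
        simp only [nsmul_eq_mul, mul_one, add_zero]
      have hmodeq : (3 * x0) % p = B.card % p :=
        (ZMod.natCast_eq_natCast_iff _ _ _).mp (key.symm.trans key2)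
      have hx0le : x0 ≤ B.card := Finset.card_filter_le _ _
      rw [Nat.mod_eq_of_lt (by omega), Nat.mod_eq_of_lt (by omega)] at hmodeq
      omega
    rcases aux_fac ((2 : ZMod p) ^ m) ha3 with ha1 | haq
    · rcases aux_fac ((3 : ZMod p) ^ m) hc3 with hc1 | hc1q
      · -- 2 and 3 both cubes: impossible
        refine (contra ?_ ?_).elim
        · intro e
          exact h6ne (by linear_combination e - ((2:ZMod p)^m + 3) * ha1 - hc1)
        · intro e
          have e' : 2 + 2 * ((2:ZMod p)^m)^2 + ((3:ZMod p)^m)^2 + (2:ZMod p)^m = 0 := by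
            linear_combination e - ((2:ZMod p)^m) * ha3
          exact h6ne (by linear_combination e' - (2*(2:ZMod p)^m + 3) * ha1
            - ((3:ZMod p)^m + 1) * hc1)
      · -- 2 cube, 3 not: impossible (p = 7 route)
        refine (contra ?_ ?_).elim
        · intro e
          have t5 : (3:ZMod p)^m + 5 = 0 := by
            linear_combination e - ((2:ZMod p)^m + 3) * ha1
          have h21 : ((21 : ℕ) : ZMod p) = 0 := by
            push_cast
            linear_combination hc1q - ((3:ZMod p)^m - 4) * t5
          rw [ZMod.natCast_eq_zero_iff] at h21
          have hle := Nat.le_of_dvd (by norm_num) h21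
          have hp7' : p = 7 := by omega
          subst hp7'
          have hm2 : m = 2 := by omega
          subst hm2
          exact absurd ha1 aux_seven
        · intro e
          have e' : 2 + 2 * ((2:ZMod p)^m)^2 + ((3:ZMod p)^m)^2 + (2:ZMod p)^m = 0 := by
            linear_combination e - ((2:ZMod p)^m) * ha3
          have t5' : ((3:ZMod p)^m)^2 + 5 = 0 := by
            linear_combination e' - (2*(2:ZMod p)^m + 3) * ha1
          have t4 : (3:ZMod p)^m - 4 = 0 := by linear_combination hc1q - t5'
          have h21 : ((21 : ℕ) : ZMod p) = 0 := by
            push_cast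
            linear_combination hc1q - ((3:ZMod p)^m + 5) * t4
          rw [ZMod.natCast_eq_zero_iff] at h21
          have hle := Nat.le_of_dvd (by norm_num) h21
          have hp7' : p = 7 := by omega
          subst hp7'
          have hm2 : m = 2 := by omega
          subst hm2
          exact absurd ha1 aux_seven
    · rcases aux_fac ((3 : ZMod p) ^ m) hc3 with hc1 | hc1q
      · -- 3 cube, 2 not: impossible
        refine (contra ?_ ?_).elim
        · intro e
          have t : (2:ZMod p)^m + 2 = 0 := by linear_combination e - haq - hc1
          exact h3ne (by linear_combination haq - ((2:ZMod p)^m - 1) * t)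
        · intro e
          have e' : 2 + 2 * ((2:ZMod p)^m)^2 + ((3:ZMod p)^m)^2 + (2:ZMod p)^m = 0 := by
            linear_combination e - ((2:ZMod p)^m) * ha3
          have t : 1 - (2:ZMod p)^m = 0 := by
            linear_combination e' - 2 * haq - ((3:ZMod p)^m + 1) * hc1
          exact h3ne (by linear_combination haq + ((2:ZMod p)^m + 2) * t)
      · -- both noncubes
        have hsplitf : ((3:ZMod p)^m - (2:ZMod p)^m) * ((3:ZMod p)^m - ((2:ZMod p)^m)^2) = 0 := by
          linear_combination hc1q + ((2:ZMod p)^m - 1 - (3:ZMod p)^m) * haq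
        rcases mul_eq_zero.mp hsplitf with hca | hca2
        · -- 3 ≡ 2 mod cubes: impossible
          have hceq : (3:ZMod p)^m = (2:ZMod p)^m := sub_eq_zero.mp hca
          refine (contra ?_ ?_).elim
          · intro e
            have t : 2 * (2:ZMod p)^m + 1 = 0 := by linear_combination e - haq - hceq
            exact h3ne (by linear_combination 4 * haq - (2 * (2:ZMod p)^m + 1) * t)
          · intro e
            have e' : 2 + 2 * ((2:ZMod p)^m)^2 + ((3:ZMod p)^m)^2 + (2:ZMod p)^m = 0 := by
              linear_combination e - ((2:ZMod p)^m) * ha3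
            have t2 : 2 * ((2:ZMod p)^m)^2 + 1 = 0 := by
              linear_combination e' - haq - ((3:ZMod p)^m + (2:ZMod p)^m) * hceq
            have t : 2 * (2:ZMod p)^m + 1 = 0 := by linear_combination 2 * haq - t2
            exact h3ne (by linear_combination 4 * haq - (2 * (2:ZMod p)^m + 1) * t)
        · -- the good case
          have hgood : (3:ZMod p)^m = ((2:ZMod p)^m)^2 := sub_eq_zero.mp hca2
          refine ⟨(hcube 6 h6ne).mpr ?_, fun hex => ?_, fun hex => ?_⟩
          · have h63 : (6 : ZMod p) = 2 * 3 := by norm_num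
            rw [h63, mul_pow, hgood]
            linear_combination ha3
          · have h1 := (hcube 2 h2ne).mp hex
            rw [h1] at haq
            exact h3ne (by linear_combination haq)
          · have h1 := (hcube 3 h3ne).mp hex
            have e : ((2:ZMod p)^m)^2 = 1 := by rw [← hgood]; exact h1
            have t : (2:ZMod p)^m + 2 = 0 := by linear_combination haq - e
            exact h3ne (by linear_combination e - ((2:ZMod p)^m - 2) * t)
  · -- backward direction: construction
    rintro ⟨hex6, hn2, hn3⟩
    have h6m1 : (6 : ZMod p) ^ m = 1 := (hcube 6 h6ne).mp hex6
    have h2m1 : (2 : ZMod p) ^ m ≠ 1 := fun h => hn2 ((hcube 2 h2ne).mpr h)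
    have haq : ((2:ZMod p)^m)^2 + (2:ZMod p)^m + 1 = 0 := by
      rcases aux_fac _ ha3 with h | h
      · exact absurd h h2m1
      · exact h
    have hac : (2:ZMod p)^m * (3:ZMod p)^m = 1 := by
      rw [← mul_pow]
      have h63 : (2 : ZMod p) * 3 = 6 := by norm_num
      rw [h63]; exact h6m1
    have hgood : (3:ZMod p)^m = ((2:ZMod p)^m)^2 := by
      linear_combination (-(3:ZMod p)^m) * ha3 + ((2:ZMod p)^m)^2 * hac
    have hp2 : 2 * (p / 2) = p - 1 := by omega
    have hhodd : (p / 2) % 2 = 1 := by omega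
    have hs2 : ((2 : ZMod p) ^ (p / 2)) ^ 2 = 1 := by
      rw [← pow_mul, Nat.mul_comm, hp2, ZMod.pow_card_sub_one_eq_one h2ne]
    have h3h : (3 : ZMod p) ^ (p / 2) = -1 := aux_three_pow (by omega) (by omega) hp7
    obtain ⟨g, hg⟩ := IsCyclic.exists_generator (α := (ZMod p)ˣ)
    have hord : orderOf g = p - 1 := by
      rw [orderOf_eq_card_of_forall_mem_zpowers hg, Nat.card_eq_fintype_card, ZMod.card_units p]
    obtain ⟨n, h6n⟩ : ∃ n, 6 * n = p - 1 := ⟨(p - 1) / 6, by omega⟩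
    set f : ℕ → ZMod p := fun k => ((g ^ (6 * k) : (ZMod p)ˣ) : ZMod p) with hf
    have hfm : ∀ k, (f k) ^ m = 1 := by
      intro k
      rw [hf]
      simp only
      rw [← Units.val_pow_eq_pow_val, ← pow_mul]
      rw [show 6 * k * m = (p - 1) * (2 * k) by rw [← hm3]; ring]
      rw [pow_mul, Units.val_pow_eq_pow_val, Units.val_pow_eq_pow_val]
      rw [ZMod.pow_card_sub_one_eq_one (Units.ne_zero g), one_pow]
    have hfh : ∀ k, (f k) ^ (p / 2) = 1 := by
      intro k
      rw [hf]
      simp only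
      rw [← Units.val_pow_eq_pow_val, ← pow_mul]
      rw [show 6 * k * (p / 2) = (p - 1) * (3 * k) by rw [← hp2]; ring]
      rw [pow_mul, Units.val_pow_eq_pow_val, Units.val_pow_eq_pow_val]
      rw [ZMod.pow_card_sub_one_eq_one (Units.ne_zero g), one_pow]
    have hf0 : ∀ k, f k ≠ 0 := fun k => Units.ne_zero _
    refine ⟨(Finset.range n).image f, ⟨⟨?_, ?_⟩, ?_⟩, ?_⟩
    · -- cardinality of bStar
      intro b hb
      obtain ⟨k, -, rfl⟩ := Finset.mem_image.mp hb
      rw [aux_bstar, Finset.card_image_of_injOn]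
      · decide
      · intro j hj j' hj' hjj
        exact aux_int_inj hp7 hj hj' (mul_left_cancel₀ (hf0 k) hjj)
    · -- pairwise disjoint
      intro b hb b' hb' hne
      obtain ⟨k, -, rfl⟩ := Finset.mem_image.mp (Finset.mem_coe.mp hb)
      obtain ⟨k', -, rfl⟩ := Finset.mem_image.mp (Finset.mem_coe.mp hb')
      rw [aux_bstar, aux_bstar, Finset.disjoint_left]
      intro x hx hx'
      obtain ⟨j, hj, hxe⟩ := Finset.mem_image.mp hx
      obtain ⟨j', hj', hxe'⟩ := Finset.mem_image.mp hx'
      have heq : f k * (j : ZMod p) = f k' * (j' : ZMod p) := hxe.trans hxe'.symm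
      have hmeq : (j : ZMod p) ^ m = (j' : ZMod p) ^ m := by
        have := congrArg (· ^ m) heq
        simp only [mul_pow, hfm, one_mul] at this
        exact this
      have hheq : (j : ZMod p) ^ (p / 2) = (j' : ZMod p) ^ (p / 2) := by
        have := congrArg (· ^ (p / 2)) heq
        simp only [mul_pow, hfh, one_mul] at this
        exact this
      have hjj' : j = j' := aux_key hp7 hmev hhodd rfl hgood haq rfl hs2 h3h j j' hj hj' hmeq hheq
      rw [hjj'] at heq
      exact hne (by rw [mul_right_cancel₀ (aux_j_ne hp7 hj') heq])
    · -- cardinality of B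
      have hinj : Set.InjOn f (Finset.range n) := by
        intro k hk k' hk' hkk
        simp only [Finset.coe_range, Set.mem_Iio] at hk hk'
        have : g ^ (6 * k) = g ^ (6 * k') := Units.ext hkk
        rw [pow_eq_pow_iff_modEq, hord, Nat.ModEq] at this
        rw [Nat.mod_eq_of_lt (by omega), Nat.mod_eq_of_lt (by omega)] at this
        omega
      rw [Finset.card_image_of_injOn hinj, Finset.card_range]
      omega
    · -- coprimality
      refine (Nat.Prime.coprime_iff_not_dvd hp).mpr fun hdvd => ?_
      have h24 : p ∣ 24 := by simpa [Nat.factorial] using hdvd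
      have := Nat.le_of_dvd (by norm_num) h24
      have hp7' : p = 7 := by omega
      rw [hp7'] at h24
      norm_num at h24
end

section
/- Let p ≡ 5 (mod 8) be a prime. Then there exists a nonsingular perfect B[0,4](p) splitter set if and only if 6 is a quartic residue modulo p (i.e., 6 ≡ x^4 (mod p) for some x). -/
lemma natCast_ne {p a b : ℕ} (hab : a < b) (hbp : b < p) : ((a : ZMod p)) ≠ (b : ZMod p) := by
  intro h
  have h2 := (ZMod.natCast_eq_natCast_iff a b p).mp h
  unfold Nat.ModEq at h2
  rw [Nat.mod_eq_of_lt (lt_trans hab hbp), Nat.mod_eq_of_lt hbp] at h2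
  omega

lemma even_of_sum_pm {p : ℕ} [Fact p.Prime] (S : Finset (ZMod p)) (f : ZMod p → ZMod p)
    (c : ZMod p) (hc : c ≠ 0) (hS : S.card < p)
    (hf : ∀ b ∈ S, f b = c ∨ f b = -c) (hsum : ∑ b ∈ S, f b = 0) :
    ∃ k, S.card = 2 * k := by
  classical
  set T := S.filter (fun b => f b = c) with hT
  set N := S.filter (fun b => ¬ (f b = c)) with hN
  have hcards : T.card + N.card = S.card := Finset.card_filter_add_card_filter_not _
  have h1 : ∑ b ∈ T, f b = (T.card : ZMod p) * c := by
    rw [Finset.sum_congr rfl (fun b hb => (Finset.mem_filter.mp hb).2), Finset.sum_const,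
      nsmul_eq_mul]
  have h2 : ∑ b ∈ N, f b = (N.card : ZMod p) * (-c) := by
    rw [Finset.sum_congr rfl (fun b hb => ?_), Finset.sum_const, nsmul_eq_mul]
    exact (hf b (Finset.mem_filter.mp hb).1).resolve_left (Finset.mem_filter.mp hb).2
  have h3 : ∑ b ∈ T, f b + ∑ b ∈ N, f b = 0 := by
    rw [Finset.sum_filter_add_sum_filter_not]; exact hsum
  rw [h1, h2] at h3
  have h4 : (T.card : ZMod p) * c = (N.card : ZMod p) * c := by ring_nf at h3 ⊢; linear_combination h3
  have h5 : (T.card : ZMod p) = (N.card : ZMod p) := mul_right_cancel₀ hc h4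
  have h6 := (ZMod.natCast_eq_natCast_iff _ _ _).mp h5
  unfold Nat.ModEq at h6
  rw [Nat.mod_eq_of_lt (lt_of_le_of_lt (le_trans (Nat.le_add_right _ _) hcards.le) hS),
    Nat.mod_eq_of_lt (lt_of_le_of_lt (le_trans (Nat.le_add_left _ _) hcards.le) hS)] at h6
  exact ⟨T.card, by omega⟩

lemma bStar04 {p : ℕ} (b : ZMod p) :
    bStar 0 4 p b = Finset.image (fun c : ZMod p => b * c) ({1, 2, 3, 4} : Finset (ZMod p)) := by
  have h : ((Finset.Icc (-((0:ℕ) : ℤ)) ((4:ℕ) : ℤ)).erase 0) = ({1, 2, 3, 4} : Finset ℤ) := by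
    decide
  rw [bStar, h]
  ext y
  simp only [Finset.mem_image, Finset.mem_insert, Finset.mem_singleton]
  constructor
  · rintro ⟨j, hj, rfl⟩
    rcases hj with rfl | rfl | rfl | rfl
    · exact ⟨1, by norm_num⟩
    · exact ⟨2, by norm_num⟩
    · exact ⟨3, by norm_num⟩
    · exact ⟨4, by norm_num⟩
  · rintro ⟨c, hc, rfl⟩
    rcases hc with rfl | rfl | rfl | rfl
    · exact ⟨1, by norm_num, by norm_num⟩
    · exact ⟨2, by norm_num, by norm_num⟩
    · exact ⟨3, by norm_num, by norm_num⟩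
    · exact ⟨4, by norm_num, by norm_num⟩
-- test setup & small facts
theorem stmt_9 (p : ℕ) (hp : p.Prime) (hmod : p % 8 = 5) :
    (∃ B : Finset (ZMod p), IsPerfectSplitter 0 4 p B ∧
        Nat.Coprime p (Nat.factorial 4)) ↔
      (∃ x : ZMod p, x ≠ 0 ∧ x ^ 4 = 6) := by
  haveI : Fact p.Prime := ⟨hp⟩
  haveI : NeZero p := ⟨by omega⟩
  obtain ⟨s, hs⟩ : ∃ s, p = 8 * s + 5 := ⟨p / 8, by omega⟩
  set m := 2 * s + 1 with hm
  have hm4 : 4 * m = p - 1 := by omega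
  have hne0 : ∀ a : ℕ, 0 < a → a < p → ((a : ℕ) : ZMod p) ≠ 0 := by
    intro a ha hap h
    rw [ZMod.natCast_eq_zero_iff] at h
    exact absurd (Nat.le_of_dvd ha h) (by omega)
  have h20 : (2 : ZMod p) ≠ 0 := by exact_mod_cast hne0 2 (by norm_num) (by omega)
  have h30 : (3 : ZMod p) ≠ 0 := by exact_mod_cast hne0 3 (by norm_num) (by omega)
  have h40 : (4 : ZMod p) ≠ 0 := by exact_mod_cast hne0 4 (by norm_num) (by omega)
  have h60 : (6 : ZMod p) ≠ 0 := by
    have h6 : ((6 : ℕ) : ZMod p) ≠ 0 := by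
      intro h
      rw [ZMod.natCast_eq_zero_iff] at h
      have h6' := Nat.le_of_dvd (by norm_num) h
      have : p = 5 := by omega
      subst this; norm_num at h
    exact_mod_cast h6
  have key : ∀ a b : ℕ, a < b → b < p → ((a : ℕ) : ZMod p) ≠ ((b : ℕ) : ZMod p) := by
    intro a b h1 h2 h
    have h3 := (ZMod.natCast_eq_natCast_iff a b p).mp h
    unfold Nat.ModEq at h3
    rw [Nat.mod_eq_of_lt (lt_trans h1 h2), Nat.mod_eq_of_lt h2] at h3
    omega
  have h12 : (1 : ZMod p) ≠ 2 := by exact_mod_cast key 1 2 (by norm_num) (by omega)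
  have h13 : (1 : ZMod p) ≠ 3 := by exact_mod_cast key 1 3 (by norm_num) (by omega)
  have h14 : (1 : ZMod p) ≠ 4 := by exact_mod_cast key 1 4 (by norm_num) (by omega)
  have h23 : (2 : ZMod p) ≠ 3 := by exact_mod_cast key 2 3 (by norm_num) (by omega)
  have h24 : (2 : ZMod p) ≠ 4 := by exact_mod_cast key 2 4 (by norm_num) (by omega)
  have h34 : (3 : ZMod p) ≠ 4 := by exact_mod_cast key 3 4 (by norm_num) (by omega)
  have hn11 : (1 : ZMod p) ≠ -1 := by
    intro h
    apply h20
    linear_combination h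
  -- Fermat
  have hF : ∀ x : ZMod p, x ≠ 0 → x ^ (4 * m) = 1 := by
    intro x hx; rw [hm4]; exact ZMod.pow_card_sub_one_eq_one hx
  -- epsilon
  obtain ⟨ε, hε⟩ : ∃ e : ZMod p, e = (2 : ZMod p) ^ m := ⟨_, rfl⟩
  have hε2 : ε ^ 2 = -1 := by
    have h2sq : ¬ IsSquare (2 : ZMod p) := by
      rw [ZMod.exists_sq_eq_two_iff (by omega : p ≠ 2)]; omega
    have hne1 : (2 : ZMod p) ^ (p / 2) ≠ 1 := fun h => h2sq ((ZMod.euler_criterion p h20).mpr h)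
    have hp2 : p / 2 = m * 2 := by omega
    have hsq : ε ^ 2 * ε ^ 2 = 1 := by
      rw [hε, ← pow_mul, ← pow_add]
      rw [show m * 2 + m * 2 = 4 * m by ring]
      exact hF 2 h20
    rcases mul_self_eq_one_iff.mp hsq with h | h
    · exfalso; apply hne1; rw [hp2, pow_mul]; rw [← hε] ; exact h
    · exact h
  have hε0 : ε ≠ 0 := by
    intro h; rw [h] at hε2; simp at hε2
  have h4me : (4 : ZMod p) ^ m = -1 := by
    have h4 : (4 : ZMod p) = 2 ^ 2 := by norm_num
    rw [h4, ← pow_mul, mul_comm 2 m, pow_mul, ← hε, hε2]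
  have h6me : (6 : ZMod p) ^ m = ε * (3 : ZMod p) ^ m := by
    have h6 : (6 : ZMod p) = 2 * 3 := by norm_num
    rw [h6, mul_pow, ← hε]
  -- quartic residue criterion
  have hQRiff : (∃ x : ZMod p, x ≠ 0 ∧ x ^ 4 = 6) ↔ (6 : ZMod p) ^ m = 1 := by
    constructor
    · rintro ⟨x, hx, hx4⟩
      rw [← hx4, ← pow_mul]
      rw [show 4 * m = 4 * m from rfl]
      exact hF x hx
    · intro h
      refine ⟨(6 : ZMod p) ^ ((s + 1) * (s + 1)), pow_ne_zero _ h60, ?_⟩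
      rw [← pow_mul]
      rw [show (s + 1) * (s + 1) * 4 = m * (m + 2) + 1 by rw [hm]; ring]
      rw [pow_succ, pow_mul, h, one_pow, one_mul]
  -- injectivity of c ↦ c^m on {1,2,3,4} given 3^m = -ε
  have hne1 : ε ≠ 1 := by
    intro h; apply hn11; rw [← hε2, h]; norm_num
  have hnen1 : ε ≠ -1 := by
    intro h; apply hn11; rw [← hε2, h]; norm_num
  have hne_neg : ε ≠ -ε := by
    intro h
    have h2e : (2 : ZMod p) * ε = 0 := by linear_combination h
    rcases mul_eq_zero.mp h2e with h' | h'
    · exact h20 h'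
    · exact hε0 h'
  have hinj14 : (3 : ZMod p) ^ m = -ε →
      ∀ c ∈ ({1, 2, 3, 4} : Finset (ZMod p)), ∀ c' ∈ ({1, 2, 3, 4} : Finset (ZMod p)),
        c ^ m = c' ^ m → c = c' := by
    intro e3 c hc c' hc' h
    have e1 : (1 : ZMod p) ^ m = 1 := one_pow m
    have e2 : (2 : ZMod p) ^ m = ε := hε.symm
    have e4 : (4 : ZMod p) ^ m = -1 := h4me
    simp only [Finset.mem_insert, Finset.mem_singleton] at hc hc'
    rcases hc with rfl | rfl | rfl | rfl <;> rcases hc' with rfl | rfl | rfl | rfl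
    · rfl
    · rw [e1, e2] at h; exact (hne1 h.symm).elim
    · rw [e1, e3] at h; exact (hnen1 (by linear_combination h)).elim
    · rw [e1, e4] at h; exact (hn11 h).elim
    · rw [e2, e1] at h; exact (hne1 h).elim
    · rfl
    · rw [e2, e3] at h; exact (hne_neg h).elim
    · rw [e2, e4] at h; exact (hnen1 h).elim
    · rw [e3, e1] at h; exact (hnen1 (by linear_combination -h)).elim
    · rw [e3, e2] at h; exact (hne_neg h.symm).elim
    · rfl
    · rw [e3, e4] at h; exact (hne1 (by linear_combination -h)).elim
    · rw [e4, e1] at h; exact (hn11 h.symm).elim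
    · rw [e4, e2] at h; exact (hnen1 h.symm).elim
    · rw [e4, e3] at h; exact (hne1 (by linear_combination h)).elim
    · rfl
  -- ============ backward: construct the splitter ==================
  have backward : (6 : ZMod p) ^ m = 1 → ∃ B : Finset (ZMod p),
      ((∀ b ∈ B, (bStar 0 4 p b).card = 0 + 4) ∧
       ((B : Set (ZMod p)).Pairwise fun b b' => Disjoint (bStar 0 4 p b) (bStar 0 4 p b'))) ∧
      (0 + 4) * B.card = p - 1 := by
    intro h6m
    classical
    have e3 : (3 : ZMod p) ^ m = -ε := by
      have hεδ : ε * (3 : ZMod p) ^ m = 1 := by rw [← h6me]; exact h6m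
      have h2 : ε * (-ε) = 1 := by linear_combination -hε2
      exact mul_left_cancel₀ hε0 (by rw [hεδ, h2])
    -- square root of -1
    obtain ⟨i, hi⟩ : ∃ i : ZMod p, i * i = -1 := by
      have hsq : IsSquare (-1 : ZMod p) := (ZMod.exists_sq_eq_neg_one_iff (p := p)).mpr (by omega)
      obtain ⟨i, hi⟩ := hsq
      exact ⟨i, hi.symm⟩
    have hi0 : i ≠ 0 := by intro h; rw [h] at hi; simp at hi
    have hi1 : i ≠ 1 := by
      intro h; rw [h] at hi; exact hn11 (by linear_combination hi)
    have hin1 : i ≠ -1 := by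
      intro h; rw [h] at hi; exact hn11 (by linear_combination hi)
    have hi4 : i ^ 4 = 1 := by
      have : i ^ 4 = (i * i) ^ 2 := by ring
      rw [this, hi]; norm_num
    set E := (Finset.univ : Finset (ZMod p)).erase 0 with hE
    set B := E.image (fun x : ZMod p => x ^ 4) with hB
    have hEcard : E.card = p - 1 := by
      rw [hE, Finset.card_erase_of_mem (Finset.mem_univ _), Finset.card_univ, ZMod.card]
    have hBmem : ∀ b ∈ B, ∃ x : ZMod p, x ≠ 0 ∧ x ^ 4 = b := by
      intro b hb
      obtain ⟨x, hx, rfl⟩ := Finset.mem_image.mp hb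
      exact ⟨x, (Finset.mem_erase.mp hx).1, rfl⟩
    have hBne : ∀ b ∈ B, b ≠ 0 := by
      intro b hb
      obtain ⟨x, hx, rfl⟩ := hBmem b hb
      exact pow_ne_zero _ hx
    have hBm : ∀ b ∈ B, b ^ m = 1 := by
      intro b hb
      obtain ⟨x, hx, rfl⟩ := hBmem b hb
      rw [← pow_mul]; exact hF x hx
    -- fibers have cardinality 4
    have hfib : ∀ b ∈ B, (E.filter (fun x => x ^ 4 = b)).card = 4 := by
      intro b hb
      obtain ⟨x0, hx00, rfl⟩ := hBmem b hb
      have hfeq : E.filter (fun x => x ^ 4 = x0 ^ 4) = {x0, -x0, i * x0, -(i * x0)} := by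
        ext x
        simp only [Finset.mem_filter, hE, Finset.mem_erase, Finset.mem_univ, true_and,
          Finset.mem_insert, Finset.mem_singleton, and_true]
        constructor
        · rintro ⟨hx0, hx4⟩
          have h1 : (x ^ 2 - x0 ^ 2) * (x ^ 2 + x0 ^ 2) = 0 := by linear_combination hx4
          rcases mul_eq_zero.mp h1 with h2 | h2
          · have h3 : (x - x0) * (x + x0) = 0 := by linear_combination h2
            rcases mul_eq_zero.mp h3 with h4 | h4
            · exact Or.inl (sub_eq_zero.mp h4)
            · exact Or.inr (Or.inl (eq_neg_of_add_eq_zero_left h4))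
          · have h3 : (x - i * x0) * (x + i * x0) = 0 := by
              linear_combination h2 - x0 ^ 2 * hi
            rcases mul_eq_zero.mp h3 with h4 | h4
            · exact Or.inr (Or.inr (Or.inl (sub_eq_zero.mp h4)))
            · exact Or.inr (Or.inr (Or.inr (eq_neg_of_add_eq_zero_left h4)))
        · intro hx
          rcases hx with rfl | rfl | rfl | rfl
          · exact ⟨hx00, rfl⟩
          · exact ⟨neg_ne_zero.mpr hx00, by ring⟩
          · exact ⟨mul_ne_zero hi0 hx00, by rw [mul_pow, hi4, one_mul]⟩
          · exact ⟨neg_ne_zero.mpr (mul_ne_zero hi0 hx00), by rw [neg_pow, mul_pow, hi4]; ring⟩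
      rw [hfeq]
      -- distinctness
      have d1 : x0 ≠ -x0 := by
        intro h
        have h2e : (2 : ZMod p) * x0 = 0 := by linear_combination h
        rcases mul_eq_zero.mp h2e with h' | h'
        · exact h20 h'
        · exact hx00 h'
      have d2 : x0 ≠ i * x0 := by
        intro h
        have : (i - 1) * x0 = 0 := by linear_combination -h
        rcases mul_eq_zero.mp this with h' | h'
        · exact hi1 (by linear_combination h')
        · exact hx00 h'
      have d3 : x0 ≠ -(i * x0) := by
        intro h
        have : (i + 1) * x0 = 0 := by linear_combination h
        rcases mul_eq_zero.mp this with h' | h'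
        · exact hin1 (by linear_combination h')
        · exact hx00 h'
      have d4 : -x0 ≠ i * x0 := by
        intro h
        have : (i + 1) * x0 = 0 := by linear_combination -h
        rcases mul_eq_zero.mp this with h' | h'
        · exact hin1 (by linear_combination h')
        · exact hx00 h'
      have d5 : -x0 ≠ -(i * x0) := by
        intro h
        have : (i - 1) * x0 = 0 := by linear_combination h
        rcases mul_eq_zero.mp this with h' | h'
        · exact hi1 (by linear_combination h')
        · exact hx00 h'
      have d6 : i * x0 ≠ -(i * x0) := by
        intro h
        have h2e : (2 : ZMod p) * (i * x0) = 0 := by linear_combination h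
        rcases mul_eq_zero.mp h2e with h' | h'
        · exact h20 h'
        · exact mul_ne_zero hi0 hx00 h'
      rw [Finset.card_insert_of_notMem (by
            simp only [Finset.mem_insert, Finset.mem_singleton]; push_neg
            exact ⟨d1, d2, d3⟩),
        Finset.card_insert_of_notMem (by
            simp only [Finset.mem_insert, Finset.mem_singleton]; push_neg
            exact ⟨d4, d5⟩),
        Finset.card_insert_of_notMem (by
            simp only [Finset.mem_singleton]; exact d6),
        Finset.card_singleton]
    have hB4 : 4 * B.card = p - 1 := by
      have h1 := Finset.card_eq_sum_card_image (fun x : ZMod p => x ^ 4) E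
      rw [Finset.sum_congr rfl hfib, Finset.sum_const, smul_eq_mul] at h1
      rw [hEcard] at h1; omega
    refine ⟨B, ⟨?_, ?_⟩, by rw [Nat.zero_add]; exact hB4⟩
    · -- cardinality of bStar
      intro b hb
      rw [bStar04, Finset.card_image_of_injOn
          (fun x _ y _ h => mul_left_cancel₀ (hBne b hb) h)]
      rw [Finset.card_insert_of_notMem (by
            simp only [Finset.mem_insert, Finset.mem_singleton]; push_neg
            exact ⟨h12, h13, h14⟩),
        Finset.card_insert_of_notMem (by
            simp only [Finset.mem_insert, Finset.mem_singleton]; push_neg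
            exact ⟨h23, h24⟩),
        Finset.card_insert_of_notMem (by
            simp only [Finset.mem_singleton]; exact h34),
        Finset.card_singleton]
    · -- pairwise disjoint
      intro b hb b' hb' hbb'
      rw [Finset.disjoint_left]
      intro y hy hy'
      rw [bStar04, Finset.mem_image] at hy hy'
      obtain ⟨c, hc, hbc⟩ := hy
      obtain ⟨c', hc', hbc'⟩ := hy'
      have hpm : c ^ m = c' ^ m := by
        have h1 : (b * c) ^ m = (b' * c') ^ m := by rw [hbc, hbc']
        rw [mul_pow, mul_pow, hBm b hb, hBm b' hb', one_mul, one_mul] at h1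
        exact h1
      have hcc : c = c' := hinj14 e3 c hc c' hc' hpm
      subst hcc
      apply hbb'
      have hc0 : c ≠ 0 := by
        simp only [Finset.mem_insert, Finset.mem_singleton] at hc
        rcases hc with rfl | rfl | rfl | rfl
        · exact one_ne_zero
        · exact h20
        · exact h30
        · exact h40
      exact mul_right_cancel₀ hc0 (by rw [hbc, hbc'])
  -- ============ forward: splitter implies 6 is a quartic residue ==========
  have forward : ∀ B : Finset (ZMod p),
      (∀ b ∈ B, (bStar 0 4 p b).card = 0 + 4) →
      ((B : Set (ZMod p)).Pairwise fun b b' => Disjoint (bStar 0 4 p b) (bStar 0 4 p b')) →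
      (0 + 4) * B.card = p - 1 → (6 : ZMod p) ^ m = 1 := by
    intro B hcard4 hdisj hperf
    classical
    obtain ⟨δ, hδ⟩ : ∃ d : ZMod p, d = (3 : ZMod p) ^ m := ⟨_, rfl⟩
    by_contra h6m
    rw [h6me, ← hδ] at h6m
    have hBcard : B.card = m := by omega
    have hBm_lt : B.card < p := by omega
    -- every element of B is nonzero
    have hb0 : ∀ b ∈ B, b ≠ 0 := by
      intro b hb hb00
      have h4 := hcard4 b hb
      subst hb00
      rw [bStar04] at h4
      simp only [zero_mul] at h4
      rw [Finset.image_const (Finset.insert_nonempty _ _) (0 : ZMod p)] at h4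
      simp at h4
    -- the sum over {1,2,3,4}
    have hsum4 : ∀ g : ZMod p → ZMod p,
        ∑ c ∈ ({1, 2, 3, 4} : Finset (ZMod p)), g c = g 1 + g 2 + g 3 + g 4 := by
      intro g
      rw [show ({1, 2, 3, 4} : Finset (ZMod p)) = insert 1 (insert 2 (insert 3 {4})) from rfl,
        Finset.sum_insert (by
          simp only [Finset.mem_insert, Finset.mem_singleton]; push_neg
          exact ⟨h12, h13, h14⟩),
        Finset.sum_insert (by
          simp only [Finset.mem_insert, Finset.mem_singleton]; push_neg
          exact ⟨h23, h24⟩),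
        Finset.sum_insert (by simp only [Finset.mem_singleton]; exact h34),
        Finset.sum_singleton]
      ring
    -- the union of the bStar sets is everything nonzero
    have hSeq : B.biUnion (bStar 0 4 p) = (Finset.univ : Finset (ZMod p)).erase 0 := by
      apply Finset.eq_of_subset_of_card_le
      · intro y hy
        obtain ⟨b, hb, hyb⟩ := Finset.mem_biUnion.mp hy
        rw [bStar04, Finset.mem_image] at hyb
        obtain ⟨c, hc, rfl⟩ := hyb
        have hc0 : c ≠ 0 := by
          simp only [Finset.mem_insert, Finset.mem_singleton] at hc
          rcases hc with rfl | rfl | rfl | rfl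
          · exact one_ne_zero
          · exact h20
          · exact h30
          · exact h40
        exact Finset.mem_erase.mpr ⟨mul_ne_zero (hb0 b hb) hc0, Finset.mem_univ _⟩
      · rw [Finset.card_erase_of_mem (Finset.mem_univ _), Finset.card_univ, ZMod.card,
          Finset.card_biUnion (fun x hx y hy hxy => hdisj hx hy hxy)]
        rw [Finset.sum_congr rfl hcard4, Finset.sum_const, smul_eq_mul]
        omega
    -- the master sum identity
    have hsum : ∀ t : ℕ, 0 < t → t < p - 1 →
        (∑ b ∈ B, b ^ t) *
          ((1 : ZMod p) ^ t + (2 : ZMod p) ^ t + (3 : ZMod p) ^ t + (4 : ZMod p) ^ t) = 0 := by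
      intro t ht0 htlt
      have h0 : ∑ x : ZMod p, x ^ t = 0 :=
        FiniteField.sum_pow_lt_card_sub_one (ZMod p) t (by rw [ZMod.card]; exact htlt)
      have h1 : ∑ x ∈ (Finset.univ : Finset (ZMod p)).erase 0, x ^ t = 0 := by
        rw [Finset.sum_erase (f := fun x : ZMod p => x ^ t) _ (zero_pow ht0.ne')]; exact h0
      rw [← hSeq, Finset.sum_biUnion (fun x hx y hy hxy => hdisj hx hy hxy)] at h1
      have h2 : ∀ b ∈ B, ∑ y ∈ bStar 0 4 p b, y ^ t =
          b ^ t * ((1 : ZMod p) ^ t + (2 : ZMod p) ^ t + (3 : ZMod p) ^ t + (4 : ZMod p) ^ t) := by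
        intro b hb
        rw [bStar04, Finset.sum_image (fun x _ y _ h => mul_left_cancel₀ (hb0 b hb) h),
          hsum4 (fun c => (b * c) ^ t)]
        simp only [mul_pow]
        ring
      rw [Finset.sum_congr rfl h2, ← Finset.sum_mul] at h1
      exact h1
    -- abbreviations
    have hquad : ∀ b ∈ B, b ^ (m * 2) = 1 ∨ b ^ (m * 2) = -1 := by
      intro b hb
      apply mul_self_eq_one_iff.mp
      rw [← pow_add, show m * 2 + m * 2 = 4 * m by ring]
      exact hF b (hb0 b hb)
    have hδ2 : δ ^ 2 = 1 ∨ δ ^ 2 = -1 := by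
      apply mul_self_eq_one_iff.mp
      rw [hδ, ← pow_mul, ← pow_add, show m * 2 + m * 2 = 4 * m by ring]
      exact hF 3 h30
    have hmodd : ¬ (∃ k, m = 2 * k) := by rintro ⟨k, hk⟩; omega
    rcases hδ2 with hd | hd
    · -- case δ² = 1 : use t = 2m
      have e2 := hsum (m * 2) (by omega) (by omega)
      have hU : (1 : ZMod p) ^ (m * 2) + 2 ^ (m * 2) + 3 ^ (m * 2) + 4 ^ (m * 2) = 2 := by
        rw [one_pow, pow_mul, pow_mul, pow_mul, ← hε, ← hδ, hε2, hd]
        have h44 : ((4 : ZMod p) ^ m) ^ 2 = 1 := by rw [h4me]; norm_num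
        rw [h44]; ring
      rw [hU] at e2
      have hT2 : ∑ b ∈ B, b ^ (m * 2) = 0 := by
        rcases mul_eq_zero.mp e2 with h | h
        · exact h
        · exact absurd h h20
      obtain ⟨k, hk⟩ := even_of_sum_pm B (fun b => b ^ (m * 2)) 1 one_ne_zero hBm_lt
        (fun b hb => by simpa using hquad b hb) hT2
      exact hmodd ⟨k, by omega⟩
    · -- case δ² = -1 : then δ = ε (δ = -ε contradicts 6 not quartic)
      have hde : δ = ε := by
        have hfac : (δ - ε) * (δ + ε) = 0 := by linear_combination hd - hε2
        rcases mul_eq_zero.mp hfac with h | h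
        · exact sub_eq_zero.mp h
        · exfalso
          apply h6m
          have : δ = -ε := eq_neg_of_add_eq_zero_left h
          rw [this]; linear_combination -hε2
      have e1 := hsum (m * 1) (by omega) (by omega)
      have e3 := hsum (m * 3) (by omega) (by omega)
      have hU1 : (1 : ZMod p) ^ (m * 1) + 2 ^ (m * 1) + 3 ^ (m * 1) + 4 ^ (m * 1)
          = 2 * ε := by
        rw [one_pow, pow_mul, pow_mul, pow_mul, ← hε, ← hδ, hde, h4me]
        ring
      have hU3 : (1 : ZMod p) ^ (m * 3) + 2 ^ (m * 3) + 3 ^ (m * 3) + 4 ^ (m * 3)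
          = 2 * ε ^ 3 := by
        rw [one_pow, pow_mul, pow_mul, pow_mul, ← hε, ← hδ, hde, h4me]
        ring
      rw [hU1] at e1
      rw [hU3] at e3
      have hT1 : ∑ b ∈ B, b ^ (m * 1) = 0 := by
        rcases mul_eq_zero.mp e1 with h | h
        · exact h
        · exact absurd h (mul_ne_zero h20 hε0)
      have hT3 : ∑ b ∈ B, b ^ (m * 3) = 0 := by
        rcases mul_eq_zero.mp e3 with h | h
        · exact h
        · exact absurd h (mul_ne_zero h20 (pow_ne_zero 3 hε0))
      simp only [pow_mul, pow_one] at hT1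
      -- split B by the quadratic character
      set P := B.filter (fun b => b ^ (m * 2) = 1) with hP
      set N := B.filter (fun b => ¬ b ^ (m * 2) = 1) with hN
      have hPN : P.card + N.card = B.card :=
        Finset.card_filter_add_card_filter_not _
      have hNval : ∀ b ∈ N, b ^ (m * 2) = -1 := by
        intro b hb
        exact (hquad b (Finset.mem_filter.mp hb).1).resolve_left (Finset.mem_filter.mp hb).2
      have hPval : ∀ b ∈ P, b ^ (m * 2) = 1 := fun b hb => (Finset.mem_filter.mp hb).2
      have hsplit : ∀ b : ZMod p, b ^ (m * 3) = b ^ m * b ^ (m * 2) := by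
        intro b; rw [← pow_add, show m + m * 2 = m * 3 by ring]
      -- sum over P of b^m is zero
      have hSP : ∑ b ∈ P, b ^ m = 0 := by
        have htot : ∑ b ∈ P, (b ^ m + b ^ (m * 3)) + ∑ b ∈ N, (b ^ m + b ^ (m * 3)) = 0 := by
          rw [Finset.sum_filter_add_sum_filter_not, Finset.sum_add_distrib, hT1, hT3, add_zero]
        have hNzero : ∑ b ∈ N, (b ^ m + b ^ (m * 3)) = 0 := by
          apply Finset.sum_eq_zero
          intro b hb
          rw [hsplit, hNval b hb]; ring
        have hPsum : ∑ b ∈ P, (b ^ m + b ^ (m * 3)) = 2 * ∑ b ∈ P, b ^ m := by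
          rw [Finset.mul_sum]
          apply Finset.sum_congr rfl
          intro b hb
          rw [hsplit, hPval b hb]; ring
        rw [hNzero, add_zero, hPsum] at htot
        rcases mul_eq_zero.mp htot with h | h
        · exact absurd h h20
        · exact h
      -- sum over N of b^m is zero
      have hSN : ∑ b ∈ N, b ^ m = 0 := by
        have htot : ∑ b ∈ P, (b ^ m - b ^ (m * 3)) + ∑ b ∈ N, (b ^ m - b ^ (m * 3)) = 0 := by
          rw [Finset.sum_filter_add_sum_filter_not, Finset.sum_sub_distrib, hT1, hT3, sub_zero]
        have hPzero : ∑ b ∈ P, (b ^ m - b ^ (m * 3)) = 0 := by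
          apply Finset.sum_eq_zero
          intro b hb
          rw [hsplit, hPval b hb]; ring
        have hNsum : ∑ b ∈ N, (b ^ m - b ^ (m * 3)) = 2 * ∑ b ∈ N, b ^ m := by
          rw [Finset.mul_sum]
          apply Finset.sum_congr rfl
          intro b hb
          rw [hsplit, hNval b hb]; ring
        rw [hPzero, zero_add, hNsum] at htot
        rcases mul_eq_zero.mp htot with h | h
        · exact absurd h h20
        · exact h
      -- values of b^m on P and N
      have hPpm : ∀ b ∈ P, b ^ m = 1 ∨ b ^ m = -1 := by
        intro b hb
        apply mul_self_eq_one_iff.mp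
        rw [← pow_add, show m + m = m * 2 by ring]
        exact hPval b hb
      have hNpm : ∀ b ∈ N, b ^ m = ε ∨ b ^ m = -ε := by
        intro b hb
        have hsq : (b ^ m) ^ 2 = ε ^ 2 := by
          rw [← pow_mul, hNval b hb, hε2]
        have hfac : (b ^ m - ε) * (b ^ m + ε) = 0 := by linear_combination hsq
        rcases mul_eq_zero.mp hfac with h | h
        · exact Or.inl (sub_eq_zero.mp h)
        · exact Or.inr (eq_neg_of_add_eq_zero_left h)
      obtain ⟨k1, hk1⟩ := even_of_sum_pm P (fun b => b ^ m) 1 one_ne_zero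
        (lt_of_le_of_lt (le_trans (Finset.card_filter_le _ _) hBcard.le) (by omega))
        (fun b hb => by simpa using hPpm b hb) hSP
      obtain ⟨k2, hk2⟩ := even_of_sum_pm N (fun b => b ^ m) ε hε0
        (lt_of_le_of_lt (le_trans (Finset.card_filter_le _ _) hBcard.le) (by omega))
        (fun b hb => by simpa using hNpm b hb) hSN
      omega
  -- ===================== conclusion =====================
  constructor
  · rintro ⟨B, hB, -⟩
    unfold IsPerfectSplitter IsSplitter at hB
    obtain ⟨⟨hc, hd⟩, hperf⟩ := hB
    exact hQRiff.mpr (forward B hc hd hperf)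
  · intro hx
    obtain ⟨B, hB1, hB2⟩ := backward (hQRiff.mp hx)
    refine ⟨B, ⟨⟨hB1.1, hB1.2⟩, hB2⟩, ?_⟩
    rw [Nat.Prime.coprime_iff_not_dvd hp]
    intro hdvd
    rw [show Nat.factorial 4 = 24 from rfl] at hdvd
    have hle := Nat.le_of_dvd (by norm_num) hdvd
    have h5 : 5 ≤ p := by omega
    interval_cases p <;> omega
end

section
/- Let p ≡ 9 (mod 16) be a prime. Then there does not exist a nonsingular perfect B[-4,4](p) splitter set. -/
open Finset

lemma aux_final (β : ZMod 4 → ℕ) (s : ℕ) (hs : s % 2 = 1) (a t : ZMod 4)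
    (ha : a = 0 ∨ a = 2)
    (hsum : β 0 + β 1 + β 2 + β 3 = s)
    (heq : ∀ r : ZMod 4, 2 * β r + β (r - a) + β (r - t) = s) : False := by
  have ht : t = 0 ∨ t = 1 ∨ t = 2 ∨ t = 3 :=
    (by decide : ∀ x : ZMod 4, x = 0 ∨ x = 1 ∨ x = 2 ∨ x = 3) t
  have h0 := heq 0; have h1 := heq 1; have h2 := heq 2; have h3 := heq 3
  rcases ha with rfl | rfl <;> rcases ht with rfl | rfl | rfl | rfl <;>
    simp only [show ((0:ZMod 4) - 0 = 0) from by decide, show ((0:ZMod 4) - 1 = 3) from by decide,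
      show ((0:ZMod 4) - 2 = 2) from by decide, show ((0:ZMod 4) - 3 = 1) from by decide,
      show ((1:ZMod 4) - 0 = 1) from by decide, show ((1:ZMod 4) - 1 = 0) from by decide,
      show ((1:ZMod 4) - 2 = 3) from by decide, show ((1:ZMod 4) - 3 = 2) from by decide,
      show ((2:ZMod 4) - 0 = 2) from by decide, show ((2:ZMod 4) - 1 = 1) from by decide,
      show ((2:ZMod 4) - 2 = 0) from by decide, show ((2:ZMod 4) - 3 = 3) from by decide,
      show ((3:ZMod 4) - 0 = 3) from by decide, show ((3:ZMod 4) - 1 = 2) from by decide,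
      show ((3:ZMod 4) - 2 = 1) from by decide, show ((3:ZMod 4) - 3 = 0) from by decide]
      at h0 h1 h2 h3 <;> omega

lemma aux_fiber {G H : Type*} [Group G] [Fintype G] [DecidableEq G] [Group H] [DecidableEq H]
    (f : G →* H) (hsurj : Function.Surjective f) (h1 h2 : H) :
    (Finset.univ.filter fun x => f x = h1).card
      = (Finset.univ.filter fun x => f x = h2).card := by
  obtain ⟨u, hu⟩ := hsurj (h1⁻¹ * h2)
  apply Finset.card_bij (fun x _ => x * u)
  · intro x hx
    simp only [mem_filter, mem_univ, true_and] at hx ⊢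
    rw [map_mul, hx, hu, mul_inv_cancel_left]
  · intro x hx y hy hxy
    exact mul_right_cancel hxy
  · intro y hy
    simp only [mem_filter, mem_univ, true_and] at hy
    refine ⟨y * u⁻¹, ?_, by simp⟩
    simp only [mem_filter, mem_univ, true_and, map_mul, map_inv, hy, hu]
    group

lemma aux_fiber_card {G H : Type*} [Group G] [Fintype G] [DecidableEq G] [Group H] [Fintype H]
    [DecidableEq H] (f : G →* H) (hsurj : Function.Surjective f) (h : H) :
    Fintype.card H * (Finset.univ.filter fun x => f x = h).card = Fintype.card G := by
  have := Finset.card_eq_sum_card_fiberwise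
    (f := f) (s := (univ : Finset G)) (t := (univ : Finset H)) (fun x _ => mem_univ _)
  have h2 := Finset.sum_congr rfl (fun h' (_ : h' ∈ (univ : Finset H)) => aux_fiber f hsurj h' h)
  rw [h2, sum_const, smul_eq_mul, card_univ] at this
  rw [this, Finset.card_univ]

theorem stmt_10 (p : ℕ) (hp : p.Prime) (hmod : p % 16 = 9) :
    ¬ ∃ B : Finset (ZMod p), IsPerfectSplitter 4 4 p B ∧
        Nat.Coprime p (Nat.factorial 4) := by
  rintro ⟨B, ⟨⟨hcard8, hdisj⟩, hperf⟩, -⟩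
  haveI : Fact p.Prime := ⟨hp⟩
  have hp9 : 9 ≤ p := by omega
  haveI : NeZero p := ⟨by omega⟩
  -- the character
  set n := Nat.card (ZMod p)ˣ with hn
  have hncard : n = p - 1 := by
    rw [hn, Nat.card_eq_fintype_card, ZMod.card_units]
  haveI : NeZero n := ⟨by omega⟩
  have hdvd : 4 ∣ n := by omega
  have h8dvd : 8 ∣ n := by omega
  let e : Multiplicative (ZMod n) ≃* (ZMod p)ˣ :=
    zmodCyclicMulEquiv inferInstance
  let χ : (ZMod p)ˣ →* Multiplicative (ZMod 4) :=
    (AddMonoidHom.toMultiplicative (ZMod.castHom hdvd (ZMod 4)).toAddMonoidHom).comp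
      e.symm.toMonoidHom
  have hχsurj : Function.Surjective χ := by
    intro r
    refine ⟨e (Multiplicative.ofAdd ((Multiplicative.toAdd r).val : ZMod n)), ?_⟩
    show Multiplicative.ofAdd ((ZMod.castHom hdvd (ZMod 4))
        (Multiplicative.toAdd (e.symm (e _)))) = r
    rw [e.symm_apply_apply]
    simp only [toAdd_ofAdd, map_natCast]
    rw [ZMod.natCast_rightInverse _]
    exact ofAdd_toAdd r
  let c : (ZMod p)ˣ → ZMod 4 := fun x => Multiplicative.toAdd (χ x)
  have hc_mul : ∀ x y : (ZMod p)ˣ, c (x * y) = c x + c y := by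
    intro x y; show Multiplicative.toAdd (χ (x*y)) = _
    rw [map_mul]; rfl
  have hc_one : c 1 = 0 := by
    show Multiplicative.toAdd (χ 1) = 0; rw [map_one]; rfl
  -- fiber counts for c
  have hfiber : ∀ r : ZMod 4,
      4 * ((univ : Finset (ZMod p)ˣ).filter fun x => c x = r).card = p - 1 := by
    intro r
    have := aux_fiber_card χ hχsurj (Multiplicative.ofAdd r)
    rw [ZMod.card_units] at this
    have hc4 : Fintype.card (Multiplicative (ZMod 4)) = 4 := rfl
    rw [hc4] at this
    exact this
  -- c(-1) = 0
  have hcneg1 : c (-1) = 0 := by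
    set y : ZMod n := Multiplicative.toAdd (e.symm (-1)) with hy
    have hyy : y + y = 0 := by
      have h0 : e.symm ((-1) * (-1)) = e.symm 1 := by norm_num
      rw [map_mul, map_one] at h0
      have h1 := congrArg Multiplicative.toAdd h0
      simpa using h1
    have hyne : y ≠ 0 := by
      intro h0
      have h1 : e.symm (-1) = 1 := by
        rw [← ofAdd_toAdd (e.symm (-1)), ← hy, h0]; rfl
      have h2 : (-1 : (ZMod p)ˣ) = 1 := by
        have h3 := congrArg e h1
        rwa [e.apply_symm_apply, map_one] at h3
      have h4 : ((-1 : (ZMod p)ˣ) : ZMod p) = 1 := by rw [h2]; rfl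
      rw [Units.val_neg, Units.val_one] at h4
      have h5 : ((2:ℕ) : ZMod p) = 0 := by push_cast; linear_combination -h4
      rw [ZMod.natCast_eq_zero_iff] at h5
      have := Nat.le_of_dvd (by norm_num) h5
      omega
    have hvne : y.val ≠ 0 := fun h => hyne ((ZMod.val_eq_zero y).mp h)
    have hvlt := ZMod.val_lt y
    have hval : n ∣ (y.val + y.val) := by
      apply Nat.dvd_of_mod_eq_zero
      have h1 := ZMod.val_add y y
      rw [hyy, ZMod.val_zero] at h1
      omega
    have hv : 2 * y.val = n := by
      have := Nat.eq_of_dvd_of_lt_two_mul (by omega) hval (by omega)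
      omega
    have hcast : c (-1) = ((y.val : ℕ) : ZMod 4) := by
      show (ZMod.castHom hdvd (ZMod 4)) (Multiplicative.toAdd (e.symm (-1))) = _
      rw [← hy]
      conv_lhs => rw [show y = ((y.val : ℕ) : ZMod n) from (ZMod.natCast_rightInverse y).symm]
      rw [map_natCast]
    rw [hcast, ZMod.natCast_eq_zero_iff]
    omega
  -- the class function on ZMod p
  set F : ZMod p → ZMod 4 := fun x => if h : x = 0 then 0 else c (Units.mk0 x h) with hF
  have hFval : ∀ (x : ZMod p) (h : x ≠ 0), F x = c (Units.mk0 x h) := by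
    intro x h; rw [hF]; simp [h]
  have hFmul : ∀ x y : ZMod p, x ≠ 0 → y ≠ 0 → F (x * y) = F x + F y := by
    intro x y hx hy
    rw [hFval _ (mul_ne_zero hx hy), hFval _ hx, hFval _ hy, ← hc_mul]
    congr 1
    exact Units.ext rfl
  have hF1 : F 1 = 0 := by
    rw [hFval _ (one_ne_zero)]
    rw [show Units.mk0 (1 : ZMod p) one_ne_zero = 1 from Units.ext rfl]
    exact hc_one
  have hFneg1 : F (-1) = 0 := by
    rw [hFval _ (by simp : (-1 : ZMod p) ≠ 0)]
    rw [show Units.mk0 (-1 : ZMod p) (by simp) = -1 from Units.ext (by simp)]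
    exact hcneg1
  have hFneg : ∀ x : ZMod p, x ≠ 0 → F (-x) = F x := by
    intro x hx
    rw [show -x = (-1) * x by ring, hFmul _ _ (by simp) hx, hFneg1, zero_add]
  have hne' : ∀ k : ℕ, 0 < k → k < p → ((k : ℕ) : ZMod p) ≠ 0 := by
    intro k h1 h2 h
    rw [ZMod.natCast_eq_zero_iff] at h
    have := Nat.le_of_dvd h1 h
    omega
  have h2ne : (2 : ZMod p) ≠ 0 := by
    have := hne' 2 (by norm_num) (by omega); push_cast at this; exact this
  have h3ne : (3 : ZMod p) ≠ 0 := by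
    have := hne' 3 (by norm_num) (by omega); push_cast at this; exact this
  have h4ne : (4 : ZMod p) ≠ 0 := by
    have := hne' 4 (by norm_num) (by omega); push_cast at this; exact this
  have hF2 : F 2 = 0 ∨ F 2 = 2 := by
    have hsq : IsSquare (2 : ZMod p) := by
      rw [ZMod.exists_sq_eq_two_iff (by omega : p ≠ 2)]
      left; omega
    obtain ⟨r, hr⟩ := hsq
    have hrne : r ≠ 0 := by rintro rfl; simp at hr; exact h2ne hr
    rw [hr, hFmul _ _ hrne hrne]
    exact (by decide : ∀ y : ZMod 4, y + y = 0 ∨ y + y = 2) (F r)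
  have hF4 : F 4 = 0 := by
    rw [show (4 : ZMod p) = 2 * 2 by norm_num, hFmul _ _ h2ne h2ne]
    rcases hF2 with h | h <;> rw [h] <;> decide
  -- combinatorial part
  have hs8 : 8 * B.card = p - 1 := by
    have := hperf; norm_num at this; omega
  have hsodd : B.card % 2 = 1 := by omega
  set S : Finset ℤ := (Finset.Icc (-((4:ℕ) : ℤ)) ((4:ℕ) : ℤ)).erase 0 with hS
  have hbdef : ∀ b : ZMod p, bStar 4 4 p b = S.image (fun j : ℤ => b * (j : ZMod p)) :=
    fun b => rfl
  have hScard : S.card = 8 := by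
    rw [hS, Finset.card_erase_of_mem (by simp), Int.card_Icc]
    rfl
  have hSmem : ∀ j : ℤ, j ∈ S ↔ j ≠ 0 ∧ -4 ≤ j ∧ j ≤ 4 := by
    intro j
    rw [hS]
    simp only [Finset.mem_erase, Finset.mem_Icc]
    push_cast
    tauto
  have hjne : ∀ j ∈ S, ((j : ℤ) : ZMod p) ≠ 0 := by
    intro j hj h
    rw [ZMod.intCast_zmod_eq_zero_iff_dvd] at h
    rw [hSmem] at hj
    have := Int.eq_zero_of_abs_lt_dvd h (by
      rw [abs_lt]; constructor <;> [push_cast; push_cast] <;> omega)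
    exact hj.1 this
  have hbne : ∀ b ∈ B, b ≠ 0 := by
    intro b hb h0
    have h8 := hcard8 b hb
    rw [h0] at h8
    have hsub : bStar 4 4 p 0 ⊆ {0} := by
      rw [hbdef]
      intro x hx
      rw [Finset.mem_image] at hx
      obtain ⟨j, _, hj⟩ := hx
      simp [← hj]
    have := Finset.card_le_card hsub
    rw [h8] at this
    simp at this
  have hdisj' : ∀ x ∈ B, ∀ y ∈ B, x ≠ y →
      Disjoint (bStar 4 4 p x) (bStar 4 4 p y) :=
    fun x hx y hy hne => hdisj (Finset.mem_coe.2 hx) (Finset.mem_coe.2 hy) hne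
  set T := B.biUnion (bStar 4 4 p) with hT
  have hTcard : T.card = 8 * B.card := by
    rw [hT, Finset.card_biUnion hdisj', Finset.sum_congr rfl (fun b hb => hcard8 b hb),
      Finset.sum_const, smul_eq_mul]
    ring
  have hTsub : T ⊆ Finset.univ.erase (0 : ZMod p) := by
    intro x hx
    rw [hT, Finset.mem_biUnion] at hx
    obtain ⟨b, hb, hxb⟩ := hx
    rw [Finset.mem_erase]
    refine ⟨?_, Finset.mem_univ _⟩
    rw [hbdef, Finset.mem_image] at hxb
    obtain ⟨j, hj, hjx⟩ := hxb
    rw [← hjx]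
    exact mul_ne_zero (hbne b hb) (hjne j hj)
  have hTeq : T = Finset.univ.erase (0 : ZMod p) := by
    apply Finset.eq_of_subset_of_card_le hTsub
    rw [hTcard, Finset.card_erase_of_mem (Finset.mem_univ 0), Finset.card_univ, ZMod.card]
    omega
  -- transfer fiber counts from units to ZMod p
  have hfiberF : ∀ r : ZMod 4,
      4 * ((Finset.univ.erase (0 : ZMod p)).filter fun x => F x = r).card = p - 1 := by
    intro r
    rw [← hfiber r]
    congr 1
    refine Finset.card_bij' (fun x hx => Units.mk0 x
        (Finset.ne_of_mem_erase (Finset.mem_of_mem_filter x hx)))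
      (fun u _ => (u : ZMod p)) ?_ ?_ ?_ ?_
    · intro a ha
      have h1 := Finset.mem_filter.1 ha
      rw [Finset.mem_filter]
      refine ⟨Finset.mem_univ _, ?_⟩
      rw [← hFval a (Finset.ne_of_mem_erase (Finset.mem_of_mem_filter a ha))]
      exact h1.2
    · intro u hu
      have h1 := Finset.mem_filter.1 hu
      rw [Finset.mem_filter]
      refine ⟨Finset.mem_erase.2 ⟨u.ne_zero, Finset.mem_univ _⟩, ?_⟩
      rw [hFval _ u.ne_zero,
        show Units.mk0 (u : ZMod p) u.ne_zero = u from Units.ext rfl]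
      exact h1.2
    · intro a ha; rfl
    · intro u hu; exact Units.ext rfl
  -- per-b fiber computation
  have hperb : ∀ b ∈ B, ∀ r : ZMod 4,
      ((bStar 4 4 p b).filter fun x => F x = r).card
        = 4 * (if F b = r then 1 else 0) + 2 * (if F b = r - F 2 then 1 else 0)
          + 2 * (if F b = r - F 3 then 1 else 0) := by
    intro b hb r
    have hbne' := hbne b hb
    have hinj : Set.InjOn (fun j : ℤ => b * (j : ZMod p)) S := by
      apply Finset.injOn_of_card_image_eq
      rw [← hbdef, hcard8 b hb, hScard]
    rw [hbdef, Finset.filter_image,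
      Finset.card_image_of_injOn (hinj.mono (Finset.filter_subset _ _)),
      Finset.card_filter]
    have hneg : ∀ k : ℕ, (k : ZMod p) ≠ 0 → F (b * (((-(k:ℤ)) : ℤ) : ZMod p)) = F b + F (k : ZMod p) := by
      intro k hk
      push_cast
      rw [mul_neg, hFneg _ (mul_ne_zero hbne' hk), hFmul _ _ hbne' hk]
    have hpos : ∀ k : ℕ, (k : ZMod p) ≠ 0 → F (b * (((k:ℤ)) : ZMod p)) = F b + F (k : ZMod p) := by
      intro k hk
      push_cast
      rw [hFmul _ _ hbne' hk]
    have h1ne : (1 : ZMod p) ≠ 0 := one_ne_zero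
    have hv1 : F (b * ((1 : ℤ) : ZMod p)) = F b := by
      have := hpos 1 (by push_cast; exact h1ne); push_cast at this ⊢
      rw [this, hF1, add_zero]
    have hvm1 : F (b * ((-1 : ℤ) : ZMod p)) = F b := by
      have := hneg 1 (by push_cast; exact h1ne); push_cast at this ⊢
      rw [this, hF1, add_zero]
    have hv2 : F (b * ((2 : ℤ) : ZMod p)) = F b + F 2 := by
      have := hpos 2 (by push_cast; exact h2ne); push_cast at this ⊢; rw [this]
    have hvm2 : F (b * ((-2 : ℤ) : ZMod p)) = F b + F 2 := by
      have := hneg 2 (by push_cast; exact h2ne); push_cast at this ⊢; rw [this]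
    have hv3 : F (b * ((3 : ℤ) : ZMod p)) = F b + F 3 := by
      have := hpos 3 (by push_cast; exact h3ne); push_cast at this ⊢; rw [this]
    have hvm3 : F (b * ((-3 : ℤ) : ZMod p)) = F b + F 3 := by
      have := hneg 3 (by push_cast; exact h3ne); push_cast at this ⊢; rw [this]
    have hv4 : F (b * ((4 : ℤ) : ZMod p)) = F b := by
      have := hpos 4 (by push_cast; exact h4ne); push_cast at this ⊢
      rw [this, hF4, add_zero]
    have hvm4 : F (b * ((-4 : ℤ) : ZMod p)) = F b := by
      have := hneg 4 (by push_cast; exact h4ne); push_cast at this ⊢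
      rw [this, hF4, add_zero]
    have hSexp : S = ({-4,-3,-2,-1,1,2,3,4} : Finset ℤ) := by decide
    rw [hSexp]
    rw [Finset.sum_insert (by decide), Finset.sum_insert (by decide),
      Finset.sum_insert (by decide), Finset.sum_insert (by decide),
      Finset.sum_insert (by decide), Finset.sum_insert (by decide),
      Finset.sum_insert (by decide), Finset.sum_singleton]
    rw [hv1, hvm1, hv2, hvm2, hv3, hvm3, hv4, hvm4]
    simp only [eq_sub_iff_add_eq]
    split_ifs <;> norm_num
  -- assemble the count equations
  set β : ZMod 4 → ℕ := fun r => (B.filter fun b => F b = r).card with hβ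
  have hkey : ∀ r : ZMod 4, 2 * β r + β (r - F 2) + β (r - F 3) = B.card := by
    intro r
    have hsplit : ((Finset.univ.erase (0 : ZMod p)).filter fun x => F x = r).card
        = ∑ b ∈ B, ((bStar 4 4 p b).filter fun x => F x = r).card := by
      rw [← hTeq, hT, Finset.filter_biUnion, Finset.card_biUnion]
      intro x hx y hy hne
      exact Finset.disjoint_filter_filter (hdisj' x hx y hy hne)
    have hsum2 : ∑ b ∈ B, ((bStar 4 4 p b).filter fun x => F x = r).card
        = 4 * β r + 2 * β (r - F 2) + 2 * β (r - F 3) := by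
      rw [Finset.sum_congr rfl (fun b hb => hperb b hb r)]
      rw [Finset.sum_add_distrib, Finset.sum_add_distrib,
        ← Finset.mul_sum, ← Finset.mul_sum, ← Finset.mul_sum]
      rw [hβ]
      simp only [Finset.card_filter]
    have h4 := hfiberF r
    rw [hsplit, hsum2] at h4
    omega
  have hsum : β 0 + β 1 + β 2 + β 3 = B.card := by
    have h := Finset.card_eq_sum_card_fiberwise
      (f := F) (s := B) (t := (Finset.univ : Finset (ZMod 4))) (fun x _ => Finset.mem_univ _)
    rw [show (Finset.univ : Finset (ZMod 4)) = ({0,1,2,3} : Finset (ZMod 4)) from by decide] at h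
    rw [Finset.sum_insert (by decide), Finset.sum_insert (by decide),
      Finset.sum_insert (by decide), Finset.sum_singleton] at h
    show (B.filter fun b => F b = 0).card + (B.filter fun b => F b = 1).card
      + (B.filter fun b => F b = 2).card + (B.filter fun b => F b = 3).card = B.card
    omega
  exact aux_final β B.card hsodd (F 2) (F 3) hF2 hsum hkey
end

section
/- Let k, m be positive integers with gcd(m, k!) = 1, and let a ≡ (-k)^{-1} (mod m) with 0 ≤ a < m. Then B = {ik + 1 : i ∈ [0, m-1], i ≠ a} is a quasi-perfect B[0,k](km) splitter set; that is, B is a B[0,k](km) set of size m - 1 = ⌊(km-1)/k⌋. -/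
lemma key (k m : ℕ) (hk : 0 < k) (hm : 0 < m)
    (hco : Nat.Coprime m (Nat.factorial k))
    (i i' : ℕ) (hi : i < m) (hi' : i' < m) (j j' : ℤ)
    (hj1 : 1 ≤ j) (hjk : j ≤ k) (hj1' : 1 ≤ j') (hjk' : j' ≤ k)
    (h : ((i * k + 1 : ℕ) : ZMod (k * m)) * (j : ZMod (k * m))
        = ((i' * k + 1 : ℕ) : ZMod (k * m)) * (j' : ZMod (k * m))) :
    i = i' ∧ j = j' := by
  have h2 : ((((i : ℤ) * k + 1) * j : ℤ) : ZMod (k * m))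
      = ((((i' : ℤ) * k + 1) * j' : ℤ) : ZMod (k * m)) := by
    push_cast at h ⊢; exact h
  rw [ZMod.intCast_eq_intCast_iff] at h2
  have hd : ((k : ℤ) * m) ∣ (((i : ℤ) * k + 1) * j - ((i' : ℤ) * k + 1) * j') :=
    (Int.ModEq.dvd h2.symm)
  have hkd : (k : ℤ) ∣ (j - j') := by
    have : (k : ℤ) ∣ (((i : ℤ) * k + 1) * j - ((i' : ℤ) * k + 1) * j') :=
      dvd_trans ⟨(m : ℤ), rfl⟩ hd
    have h3 : (j - j') = (((i : ℤ) * k + 1) * j - ((i' : ℤ) * k + 1) * j')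
        - k * ((i : ℤ) * j - i' * j') := by ring
    rw [h3]
    exact dvd_sub this (Dvd.intro _ rfl)
  have hjj : j = j' := by
    have := Int.eq_zero_of_abs_lt_dvd hkd (by rw [abs_lt]; omega)
    omega
  subst hjj
  refine ⟨?_, rfl⟩
  have hj0 : (0 : ℤ) < j := hj1
  have hdm : (m : ℤ) ∣ ((i : ℤ) - i') * j := by
    have h4 : (((i : ℤ) * k + 1) * j - ((i' : ℤ) * k + 1) * j)
        = (k : ℤ) * (((i : ℤ) - i') * j) := by ring
    rw [h4] at hd
    exact (mul_dvd_mul_iff_left (by positivity : (k:ℤ) ≠ 0)).mp hd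
  have hcop : IsCoprime (m : ℤ) j := by
    rw [Int.isCoprime_iff_gcd_eq_one]
    have : j = (j.toNat : ℤ) := (Int.toNat_of_nonneg (by omega)).symm
    rw [this, Int.gcd_natCast_natCast]
    exact Nat.Coprime.coprime_dvd_right
      (Nat.dvd_factorial (by omega) (by omega)) hco
  have hdm2 : (m : ℤ) ∣ ((i : ℤ) - i') := hcop.dvd_of_dvd_mul_right hdm
  have := Int.eq_zero_of_abs_lt_dvd hdm2 (by rw [abs_lt]; omega)
  omega

lemma mem_aux (k : ℕ) (j : ℤ) (hj : j ∈ (Finset.Icc (-((0:ℕ) : ℤ)) (k : ℤ)).erase 0) :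
    1 ≤ j ∧ j ≤ k := by
  simp only [Finset.mem_erase, Finset.mem_Icc, Nat.cast_zero, neg_zero] at hj
  omega

theorem stmt_11 (k m a : ℕ) (hk : 0 < k) (hm : 0 < m)
    (hco : Nat.Coprime m (Nat.factorial k)) (ha : a < m)
    (hainv : (a * k + 1) % m = 0) :
    IsSplitter 0 k (k * m)
        (((Finset.range m).erase a).image
          (fun i => ((i * k + 1 : ℕ) : ZMod (k * m)))) ∧
      (((Finset.range m).erase a).image
          (fun i => ((i * k + 1 : ℕ) : ZMod (k * m)))).card = m - 1 := by
  refine ⟨⟨?_, ?_⟩, ?_⟩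
  · intro b hb
    simp only [Finset.mem_image, Finset.mem_erase, Finset.mem_range] at hb
    obtain ⟨i, ⟨hia, him⟩, rfl⟩ := hb
    rw [bStar, Finset.card_image_of_injOn, Finset.card_erase_of_mem]
    · simp
    · simp only [Finset.mem_Icc, Nat.cast_zero, neg_zero]
      exact ⟨le_refl 0, by positivity⟩
    · intro j hj j' hj' heq
      obtain ⟨h1, h2⟩ := mem_aux k j hj
      obtain ⟨h1', h2'⟩ := mem_aux k j' hj'
      exact (key k m hk hm hco i i him him j j' h1 h2 h1' h2' heq).2
  · intro b hb b' hb' hne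
    simp only [Finset.coe_image, Set.mem_image, Finset.mem_coe, Finset.mem_erase,
      Finset.mem_range] at hb hb'
    obtain ⟨i, ⟨hia, him⟩, rfl⟩ := hb
    obtain ⟨i', ⟨hia', him'⟩, rfl⟩ := hb'
    rw [Finset.disjoint_left]
    intro x hx hx'
    simp only [bStar, Finset.mem_image] at hx hx'
    obtain ⟨j, hj, hjx⟩ := hx
    obtain ⟨j', hj', hjx'⟩ := hx'
    obtain ⟨h1, h2⟩ := mem_aux k j hj
    obtain ⟨h1', h2'⟩ := mem_aux k j' hj'
    have := (key k m hk hm hco i i' him him' j j' h1 h2 h1' h2'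
      (hjx.trans hjx'.symm)).1
    exact hne (by rw [this])
  · rw [Finset.card_image_of_injOn, Finset.card_erase_of_mem (by simpa using ha),
      Finset.card_range]
    intro i hi i' hi' heq
    simp only [Finset.coe_erase, Set.mem_diff, Finset.coe_range, Set.mem_Iio] at hi hi'
    have h : ((i * k + 1 : ℕ) : ZMod (k * m)) * ((1:ℤ) : ZMod (k * m))
        = ((i' * k + 1 : ℕ) : ZMod (k * m)) * ((1:ℤ) : ZMod (k * m)) := by
      push_cast
      simpa using heq
    exact (key k m hk hm hco i i' hi.1 hi'.1 1 1 (le_refl 1) (by exact_mod_cast hk)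
      (le_refl 1) (by exact_mod_cast hk) h).1
end

section
/- Let k > 0 be an integer and p a prime with k < p < 2k. Then B = {k+1} ∪ {1 + (2k+2)i : i ∈ [0, p-1]} is a quasi-perfect B[-k,k](p(2k+2)) splitter set; that is, B is a B[-k,k](p(2k+2)) set of size p+1 = ⌊(p(2k+2)-1)/(2k)⌋. -/
theorem stmt_12 (k p : ℕ) (hk : 0 < k) (hp : p.Prime) (h1 : k < p) (h2 : p < 2 * k) :
    IsSplitter k k (p * (2 * k + 2))
        (insert ((k + 1 : ℕ) : ZMod (p * (2 * k + 2)))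
          ((Finset.range p).image
            (fun i => ((1 + (2 * k + 2) * i : ℕ) : ZMod (p * (2 * k + 2)))))) ∧
      (insert ((k + 1 : ℕ) : ZMod (p * (2 * k + 2)))
          ((Finset.range p).image
            (fun i => ((1 + (2 * k + 2) * i : ℕ) : ZMod (p * (2 * k + 2)))))).card
        = p + 1 := by
  have hppos : 0 < p := hp.pos
  set Q : ℕ := p * (2 * k + 2) with hQdef
  have hQ : (Q : ℤ) = (p : ℤ) * (2 * (k : ℤ) + 2) := by
    simp only [hQdef]; push_cast; ring
  set S : Finset ℤ := (Finset.Icc (-(k : ℤ)) (k : ℤ)).erase 0 with hS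
  have hmemS : ∀ j : ℤ, j ∈ S ↔ j ≠ 0 ∧ -(k : ℤ) ≤ j ∧ j ≤ k := by
    intro j; simp [hS, Finset.mem_erase, Finset.mem_Icc, and_assoc]
  have hone : (1 : ℤ) ∈ S := by rw [hmemS]; omega
  have hcardS : S.card = k + k := by
    rw [hS, Finset.card_erase_of_mem (by rw [Finset.mem_Icc]; omega), Int.card_Icc]
    omega
  have key : ∀ a b : ℤ, ((a : ZMod Q) = (b : ZMod Q)) ↔ (Q : ℤ) ∣ b - a := by
    intro a b
    rw [ZMod.intCast_eq_intCast_iff, Int.modEq_iff_dvd]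
  have keyn : ∀ (n : ℕ) (j : ℤ), ((n : ℕ) : ZMod Q) * (j : ZMod Q)
      = (((n : ℤ) * j : ℤ) : ZMod Q) := by
    intro n j; push_cast; ring
  have cross : ∀ (n m : ℕ) (j j' : ℤ),
      ((n : ℕ) : ZMod Q) * (j : ZMod Q) = ((m : ℕ) : ZMod Q) * (j' : ZMod Q) →
      (Q : ℤ) ∣ (m : ℤ) * j' - (n : ℤ) * j := by
    intro n m j j' h
    rw [keyn, keyn] at h
    exact (key _ _).mp h
  have hpz : Prime (p : ℤ) := Nat.prime_iff_prime_int.mp hp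
  -- Lemma Lk : injectivity for b = k+1
  have Lk : ∀ d : ℤ, (Q : ℤ) ∣ ((k : ℤ) + 1) * d → |d| ≤ 2 * k → d = 0 := by
    intro d hdvd hbd
    have hrw : (Q : ℤ) = ((k : ℤ) + 1) * (2 * p) := by rw [hQ]; ring
    rw [hrw] at hdvd
    have h2p : (2 * (p : ℤ)) ∣ d :=
      (mul_dvd_mul_iff_left (by positivity : ((k : ℤ) + 1) ≠ 0)).mp hdvd
    exact Int.eq_zero_of_abs_lt_dvd h2p (by omega)
  -- Lemma L1 : bStar(k+1) and bStar(1+(2k+2)i) are disjoint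
  have L1 : ∀ (i : ℕ) (j j' : ℤ), j ∈ S → j' ∈ S →
      ¬ (Q : ℤ) ∣ ((k : ℤ) + 1) * j - (1 + (2 * (k : ℤ) + 2) * i) * j' := by
    intro i j j' hj hj' hdvd
    obtain ⟨hj0, hjl, hjr⟩ := (hmemS j).mp hj
    obtain ⟨hj'0, hj'l, hj'r⟩ := (hmemS j').mp hj'
    have hd1 : ((k : ℤ) + 1) ∣ (Q : ℤ) := ⟨2 * p, by rw [hQ]; ring⟩
    have hd2 : ((k : ℤ) + 1) ∣ ((k : ℤ) + 1) * j - (1 + (2 * (k : ℤ) + 2) * i) * j' :=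
      hd1.trans hdvd
    have hd3 : ((k : ℤ) + 1) ∣ j' := by
      have hrw : j' = ((k : ℤ) + 1) * (j - 2 * i * j')
          - (((k : ℤ) + 1) * j - (1 + (2 * (k : ℤ) + 2) * i) * j') := by ring
      rw [hrw]
      exact dvd_sub (Dvd.intro _ rfl) hd2
    have hle : ((k : ℤ) + 1) ≤ |j'| :=
      Int.le_of_dvd (abs_pos.mpr hj'0) ((dvd_abs _ _).mpr hd3)
    have : |j'| ≤ k := abs_le.mpr ⟨hj'l, hj'r⟩
    omega
  -- Lemma L2 : the main injectivity / disjointness lemma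
  have L2 : ∀ (i i' : ℕ), i < p → i' < p → ∀ j j' : ℤ, j ∈ S → j' ∈ S →
      (Q : ℤ) ∣ (1 + (2 * (k : ℤ) + 2) * i) * j - (1 + (2 * (k : ℤ) + 2) * i') * j' →
      i = i' ∧ j = j' := by
    intro i i' hi hi' j j' hj hj' hdvd
    obtain ⟨hj0, hjl, hjr⟩ := (hmemS j).mp hj
    obtain ⟨hj'0, hj'l, hj'r⟩ := (hmemS j').mp hj'
    have hd1 : (2 * (k : ℤ) + 2) ∣ (Q : ℤ) := ⟨p, by rw [hQ]; ring⟩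
    have hd2 : (2 * (k : ℤ) + 2) ∣
        (1 + (2 * (k : ℤ) + 2) * i) * j - (1 + (2 * (k : ℤ) + 2) * i') * j' :=
      hd1.trans hdvd
    have hd3 : (2 * (k : ℤ) + 2) ∣ j - j' := by
      have hrw : j - j' = ((1 + (2 * (k : ℤ) + 2) * i) * j - (1 + (2 * (k : ℤ) + 2) * i') * j')
          - (2 * (k : ℤ) + 2) * ((i : ℤ) * j - (i' : ℤ) * j') := by ring
      rw [hrw]
      exact dvd_sub hd2 (Dvd.intro _ rfl)
    have hjj : j = j' := by
      have := Int.eq_zero_of_abs_lt_dvd hd3 (by rw [abs_lt]; omega)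
      omega
    subst hjj
    have h2 : (Q : ℤ) ∣ (2 * (k : ℤ) + 2) * (((i : ℤ) - i') * j) := by
      have hrw : (2 * (k : ℤ) + 2) * (((i : ℤ) - i') * j)
          = (1 + (2 * (k : ℤ) + 2) * i) * j - (1 + (2 * (k : ℤ) + 2) * i') * j := by ring
      rw [hrw]; exact hdvd
    rw [hQ, show (p : ℤ) * (2 * (k : ℤ) + 2) = (2 * (k : ℤ) + 2) * p from by ring] at h2
    have h3 : (p : ℤ) ∣ ((i : ℤ) - i') * j :=
      (mul_dvd_mul_iff_left (by positivity : (2 * (k : ℤ) + 2) ≠ 0)).mp h2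
    rcases hpz.dvd_mul.mp h3 with h4 | h4
    · have : (i : ℤ) - i' = 0 := Int.eq_zero_of_abs_lt_dvd h4 (by rw [abs_lt]; omega)
      exact ⟨by omega, rfl⟩
    · have hle : (p : ℤ) ≤ |j| := Int.le_of_dvd (abs_pos.mpr hj0) ((dvd_abs _ _).mpr h4)
      have : |j| ≤ k := abs_le.mpr ⟨hjl, hjr⟩
      omega
  -- cardinality of bStar sets
  have hbStar_card : ∀ n : ℕ,
      (∀ j j' : ℤ, j ∈ S → j' ∈ S → (Q : ℤ) ∣ (n : ℤ) * j' - (n : ℤ) * j → j = j') →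
      (bStar k k Q ((n : ℕ) : ZMod Q)).card = k + k := by
    intro n hinj
    unfold bStar
    rw [← hS, Finset.card_image_of_injOn, hcardS]
    intro j hj j' hj' heq
    exact hinj j j' hj hj' (cross n n j j' heq)
  -- the two injectivity instances
  have hinj1 : ∀ j j' : ℤ, j ∈ S → j' ∈ S →
      (Q : ℤ) ∣ ((k + 1 : ℕ) : ℤ) * j' - ((k + 1 : ℕ) : ℤ) * j → j = j' := by
    intro j j' hj hj' hdvd
    obtain ⟨hj0, hjl, hjr⟩ := (hmemS j).mp hj
    obtain ⟨hj'0, hj'l, hj'r⟩ := (hmemS j').mp hj'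
    have : (Q : ℤ) ∣ ((k : ℤ) + 1) * (j' - j) := by
      have hrw : ((k : ℤ) + 1) * (j' - j) = ((k + 1 : ℕ) : ℤ) * j' - ((k + 1 : ℕ) : ℤ) * j := by
        push_cast; ring
      rw [hrw]; exact hdvd
    have := Lk (j' - j) this (by rw [abs_le]; omega)
    omega
  have hinj2 : ∀ i : ℕ, i < p → ∀ j j' : ℤ, j ∈ S → j' ∈ S →
      (Q : ℤ) ∣ ((1 + (2 * k + 2) * i : ℕ) : ℤ) * j' - ((1 + (2 * k + 2) * i : ℕ) : ℤ) * j →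
      j = j' := by
    intro i hi j j' hj hj' hdvd
    have hdvd' : (Q : ℤ) ∣ (1 + (2 * (k : ℤ) + 2) * i) * j' - (1 + (2 * (k : ℤ) + 2) * i) * j := by
      have hrw : (1 + (2 * (k : ℤ) + 2) * i) * j' - (1 + (2 * (k : ℤ) + 2) * i) * j
          = ((1 + (2 * k + 2) * i : ℕ) : ℤ) * j' - ((1 + (2 * k + 2) * i : ℕ) : ℤ) * j := by
        push_cast; ring
      rw [hrw]; exact hdvd
    exact ((L2 i i hi hi j' j hj' hj hdvd').2).symm
  refine ⟨⟨?_, ?_⟩, ?_⟩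
  · -- cardinalities
    intro b hb
    rcases Finset.mem_insert.mp hb with rfl | hb
    · exact hbStar_card (k + 1) hinj1
    · obtain ⟨i, hi, rfl⟩ := Finset.mem_image.mp hb
      exact hbStar_card (1 + (2 * k + 2) * i) (hinj2 i (Finset.mem_range.mp hi))
  · -- pairwise disjoint
    intro b hb b' hb' hne
    rw [Finset.coe_insert, Set.mem_insert_iff, Finset.coe_image, Set.mem_image] at hb hb'
    rw [Finset.disjoint_left]
    rintro x hx hx'
    -- unfold memberships
    unfold bStar at hx hx'
    rw [Finset.mem_image] at hx hx'
    obtain ⟨j, hjS, hxj⟩ := hx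
    obtain ⟨j', hj'S, hxj'⟩ := hx'
    rw [← hS] at hjS hj'S
    have heq : b * (j : ZMod Q) = b' * (j' : ZMod Q) := by rw [hxj, hxj']
    rcases hb with rfl | ⟨i, hi, rfl⟩ <;> rcases hb' with rfl | ⟨i', hi', rfl⟩
    · exact hne rfl
    · -- b = k+1, b' = 1+(2k+2)i'
      have := cross (k + 1) (1 + (2 * k + 2) * i') j j' heq
      refine L1 i' j j' hjS hj'S ?_
      have hrw : ((k : ℤ) + 1) * j - (1 + (2 * (k : ℤ) + 2) * i') * j'
          = -(((1 + (2 * k + 2) * i' : ℕ) : ℤ) * j' - ((k + 1 : ℕ) : ℤ) * j) := by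
        push_cast; ring
      rw [hrw]
      exact this.neg_right
    · -- b = 1+(2k+2)i, b' = k+1
      have := cross (1 + (2 * k + 2) * i) (k + 1) j j' heq
      refine L1 i j' j hj'S hjS ?_
      have hrw : ((k : ℤ) + 1) * j' - (1 + (2 * (k : ℤ) + 2) * i) * j
          = ((k + 1 : ℕ) : ℤ) * j' - ((1 + (2 * k + 2) * i : ℕ) : ℤ) * j := by
        push_cast; ring
      rw [hrw]
      exact this
    · -- both of the second type
      have hcr := cross (1 + (2 * k + 2) * i) (1 + (2 * k + 2) * i') j j' heq
      have hdvd' : (Q : ℤ) ∣ (1 + (2 * (k : ℤ) + 2) * i') * j'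
          - (1 + (2 * (k : ℤ) + 2) * i) * j := by
        have hrw : (1 + (2 * (k : ℤ) + 2) * i') * j' - (1 + (2 * (k : ℤ) + 2) * i) * j
            = ((1 + (2 * k + 2) * i' : ℕ) : ℤ) * j' - ((1 + (2 * k + 2) * i : ℕ) : ℤ) * j := by
          push_cast; ring
        rw [hrw]; exact hcr
      obtain ⟨hii, -⟩ := L2 i' i (by simpa using hi') (by simpa using hi) j' j hj'S hjS hdvd'
      exact hne (by rw [hii])
  · -- cardinality of B
    have hinj : Set.InjOn (fun i => ((1 + (2 * k + 2) * i : ℕ) : ZMod Q))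
        ↑(Finset.range p) := by
      intro i hi i' hi' hii
      simp only [Finset.coe_range, Set.mem_Iio] at hi hi'
      have heq : ((1 + (2 * k + 2) * i : ℕ) : ZMod Q) * ((1 : ℤ) : ZMod Q)
          = ((1 + (2 * k + 2) * i' : ℕ) : ZMod Q) * ((1 : ℤ) : ZMod Q) := by
        simpa using hii
      have hcr := cross (1 + (2 * k + 2) * i) (1 + (2 * k + 2) * i') 1 1 heq
      have hdvd' : (Q : ℤ) ∣ (1 + (2 * (k : ℤ) + 2) * i') * 1
          - (1 + (2 * (k : ℤ) + 2) * i) * 1 := by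
        have hrw : (1 + (2 * (k : ℤ) + 2) * i') * 1 - (1 + (2 * (k : ℤ) + 2) * i) * 1
            = ((1 + (2 * k + 2) * i' : ℕ) : ℤ) * 1 - ((1 + (2 * k + 2) * i : ℕ) : ℤ) * 1 := by
          push_cast; ring
        rw [hrw]; exact hcr
      exact (L2 i' i hi' hi 1 1 hone hone hdvd').1.symm
    have hnotmem : ((k + 1 : ℕ) : ZMod Q) ∉
        (Finset.range p).image (fun i => ((1 + (2 * k + 2) * i : ℕ) : ZMod Q)) := by
      intro hmem
      obtain ⟨i, hi, hieq⟩ := Finset.mem_image.mp hmem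
      have heq : ((1 + (2 * k + 2) * i : ℕ) : ZMod Q) * ((1 : ℤ) : ZMod Q)
          = ((k + 1 : ℕ) : ZMod Q) * ((1 : ℤ) : ZMod Q) := by
        simpa using hieq
      have hcr := cross (1 + (2 * k + 2) * i) (k + 1) 1 1 heq
      refine L1 i 1 1 hone hone ?_
      have hrw : ((k : ℤ) + 1) * 1 - (1 + (2 * (k : ℤ) + 2) * i) * 1
          = ((k + 1 : ℕ) : ℤ) * 1 - ((1 + (2 * k + 2) * i : ℕ) : ℤ) * 1 := by
        push_cast; ring
      rw [hrw]; exact hcr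
    rw [Finset.card_insert_of_notMem hnotmem, Finset.card_image_of_injOn hinj,
      Finset.card_range]
end

section
/- Let k > 0 be an integer and p a prime with k < p < (4k-1)/3. Then B = {k+1} ∪ {1 + (2k+2)i : i ∈ [0, p-1]} is a quasi-perfect B[-(k-1),k](p(2k+2)) splitter set; that is, B is a B[-(k-1),k](p(2k+2)) set of size p+1 = ⌊(p(2k+2)-1)/(2k-1)⌋. -/
private lemma auxZero {a n : ℤ} (hd : n ∣ a) (h : |a| < n) : a = 0 := by
  rcases eq_or_ne a 0 with h0 | h0
  · exact h0
  · exact absurd (Int.le_of_dvd (abs_pos.mpr h0) ((dvd_abs n a).mpr hd)) (not_le.mpr h)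

-- core lemma for elements 1 + (2k+2)i
private lemma auxCore {k p : ℕ} (hk : 0 < k) (hp : p.Prime) (h1 : k < p)
    {i i' : ℕ} (hi : i < p) (hi' : i' < p) {j j' : ℤ}
    (hj0 : j ≠ 0) (hj1 : -(k:ℤ) + 1 ≤ j) (hj2 : j ≤ k)
    (hj0' : j' ≠ 0) (hj1' : -(k:ℤ) + 1 ≤ j') (hj2' : j' ≤ k)
    (h : ((p:ℤ) * (2*k+2)) ∣ (1+(2*k+2)*i)*j - (1+(2*k+2)*i')*j') :
    i = i' ∧ j = j' := by
  have hkk : (0:ℤ) < 2*(k:ℤ)+2 := by positivity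
  have hd1 : ((2*(k:ℤ)+2)) ∣ (1+(2*k+2)*i)*j - (1+(2*k+2)*i')*j' :=
    dvd_trans ⟨p, by ring⟩ h
  have hd2 : ((2*(k:ℤ)+2)) ∣ j - j' := by
    have : ((2*(k:ℤ)+2)) ∣ (2*(k:ℤ)+2) * ((i:ℤ)*j - i'*j') := Dvd.intro _ rfl
    have := dvd_sub hd1 this
    have he : (1+(2*(k:ℤ)+2)*i)*j - (1+(2*(k:ℤ)+2)*i')*j' -
        (2*(k:ℤ)+2) * ((i:ℤ)*j - i'*j') = j - j' := by ring
    rwa [he] at this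
  have hjj : j = j' := by
    have habs : |j - j'| < 2*(k:ℤ)+2 := by
      rw [abs_lt]; omega
    have := auxZero hd2 habs
    omega
  subst hjj
  refine ⟨?_, rfl⟩
  have hd3 : ((p:ℤ) * (2*k+2)) ∣ (2*(k:ℤ)+2) * (((i:ℤ) - i') * j) := by
    have he : (1+(2*(k:ℤ)+2)*i)*j - (1+(2*(k:ℤ)+2)*i')*j
        = (2*(k:ℤ)+2) * (((i:ℤ) - i') * j) := by ring
    rwa [he] at h
  have hd4 : (p:ℤ) ∣ ((i:ℤ) - i') * j := by
    have : (2*(k:ℤ)+2) * (p:ℤ) ∣ (2*(k:ℤ)+2) * (((i:ℤ) - i') * j) := by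
      have : (p:ℤ) * (2*(k:ℤ)+2) = (2*(k:ℤ)+2) * (p:ℤ) := by ring
      rwa [this] at hd3
    exact (mul_dvd_mul_iff_left (by positivity : (2*(k:ℤ)+2) ≠ 0)).mp this
  have hpz : Prime (p:ℤ) := Int.prime_iff_natAbs_prime.mpr (by simpa using hp)
  rcases hpz.dvd_mul.mp hd4 with hc | hc
  · have : ((i:ℤ) - i') = 0 := by
      refine auxZero hc ?_
      rw [abs_lt]; omega
    omega
  · exfalso
    have := Int.le_of_dvd (abs_pos.mpr hj0) ((dvd_abs _ _).mpr hc)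
    have : |j| ≤ (k:ℤ) := abs_le.mpr ⟨by omega, hj2⟩
    omega

-- core lemma ruling out (k+1)*j = (1+(2k+2)i)*j'
private lemma auxCross {k p : ℕ} (hk : 0 < k) {i : ℕ} {j j' : ℤ}
    (hj0' : j' ≠ 0) (hj1' : -(k:ℤ) + 1 ≤ j') (hj2' : j' ≤ k)
    (h : ((p:ℤ) * (2*k+2)) ∣ ((k:ℤ)+1)*j - (1+(2*k+2)*i)*j') : False := by
  have hd1 : ((k:ℤ)+1) ∣ ((k:ℤ)+1)*j - (1+(2*k+2)*i)*j' :=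
    dvd_trans ⟨2*p, by push_cast; ring⟩ h
  have hd2 : ((k:ℤ)+1) ∣ j' := by
    have : ((k:ℤ)+1) ∣ ((k:ℤ)+1) * (j - 2*i*j') := Dvd.intro _ rfl
    have := dvd_sub this hd1
    have he : ((k:ℤ)+1) * (j - 2*i*j') - (((k:ℤ)+1)*j - (1+(2*k+2)*i)*j') = j' := by ring
    rwa [he] at this
  have : j' = 0 := by
    refine auxZero hd2 ?_
    rw [abs_lt]; omega
  exact hj0' this

-- core lemma for k+1: injectivity
private lemma auxK1 {k p : ℕ} (hk : 0 < k) (h1 : k < p) {j j' : ℤ}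
    (hj1 : -(k:ℤ) + 1 ≤ j) (hj2 : j ≤ k)
    (hj1' : -(k:ℤ) + 1 ≤ j') (hj2' : j' ≤ k)
    (h : ((p:ℤ) * (2*k+2)) ∣ ((k:ℤ)+1)*j - ((k:ℤ)+1)*j') : j = j' := by
  have hd : (2*(p:ℤ)) ∣ j - j' := by
    have h' : (((k:ℤ)+1) * (2*(p:ℤ))) ∣ (((k:ℤ)+1) * (j - j')) := by
      have e1 : (p:ℤ) * (2*k+2) = ((k:ℤ)+1) * (2*(p:ℤ)) := by ring
      have e2 : ((k:ℤ)+1)*j - ((k:ℤ)+1)*j' = ((k:ℤ)+1) * (j - j') := by ring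
      rwa [e1, e2] at h
    rcases h' with ⟨c, hc⟩
    refine ⟨c, ?_⟩
    have hkne : ((k:ℤ)+1) ≠ 0 := by positivity
    have : ((k:ℤ)+1) * (j - j') = ((k:ℤ)+1) * (2*(p:ℤ)*c) := by rw [hc]; ring
    exact mul_left_cancel₀ hkne this
  have : j - j' = 0 := by
    refine auxZero hd ?_
    rw [abs_lt]
    constructor <;> [omega; omega]
  omega

-- membership lemma for the erased Icc with k1 = k-1
private lemma auxMem {k : ℕ} (hk : 0 < k) {j : ℤ}
    (hj : j ∈ (Finset.Icc (-((k-1 : ℕ) : ℤ)) (k : ℤ)).erase 0) :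
    j ≠ 0 ∧ -(k:ℤ) + 1 ≤ j ∧ j ≤ k := by
  simp only [Finset.mem_erase, Finset.mem_Icc] at hj
  have : ((k-1:ℕ):ℤ) = (k:ℤ) - 1 := by omega
  omega

-- extracting divisibility from ZMod equation
private lemma auxDvd {k p : ℕ} {a a' : ℕ} {j j' : ℤ}
    (h : ((a : ℕ) : ZMod (p * (2*k+2))) * (j : ZMod (p * (2*k+2)))
       = ((a' : ℕ) : ZMod (p * (2*k+2))) * (j' : ZMod (p * (2*k+2)))) :
    ((p:ℤ) * (2*k+2)) ∣ (a:ℤ)*j - (a':ℤ)*j' := by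
  have h2 : (((a:ℤ)*j : ℤ) : ZMod (p * (2*k+2))) = (((a':ℤ)*j' : ℤ) : ZMod (p * (2*k+2))) := by
    push_cast
    exact_mod_cast h
  have h3 := (ZMod.intCast_eq_intCast_iff _ _ _).mp h2
  have h4 := Int.ModEq.dvd h3
  have : ((p * (2*k+2) : ℕ) : ℤ) = (p:ℤ) * (2*k+2) := by push_cast; ring
  rw [this] at h4
  have h5 := dvd_neg.mpr h4
  rwa [neg_sub] at h5


theorem stmt_13 (k p : ℕ) (hk : 0 < k) (hp : p.Prime) (h1 : k < p)
    (h2 : 3 * p < 4 * k - 1) :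
    IsSplitter (k - 1) k (p * (2 * k + 2))
        (insert ((k + 1 : ℕ) : ZMod (p * (2 * k + 2)))
          ((Finset.range p).image
            (fun i => ((1 + (2 * k + 2) * i : ℕ) : ZMod (p * (2 * k + 2)))))) ∧
      (insert ((k + 1 : ℕ) : ZMod (p * (2 * k + 2)))
          ((Finset.range p).image
            (fun i => ((1 + (2 * k + 2) * i : ℕ) : ZMod (p * (2 * k + 2)))))).card
        = p + 1 := by
  have hScard : ((Finset.Icc (-((k-1 : ℕ):ℤ)) (k:ℤ)).erase 0).card = (k-1) + k := by
    rw [Finset.card_erase_of_mem (by simp only [Finset.mem_Icc]; omega), Int.card_Icc]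
    omega
  refine ⟨⟨?_, ?_⟩, ?_⟩
  · -- cardinalities
    intro b hb
    rw [Finset.mem_insert] at hb
    unfold bStar
    rw [Finset.card_image_of_injOn, hScard]
    rcases hb with rfl | hb
    · intro j hj j' hj' heq
      obtain ⟨hj0, hj1, hj2⟩ := auxMem hk (Finset.mem_coe.mp hj)
      obtain ⟨hj0', hj1', hj2'⟩ := auxMem hk (Finset.mem_coe.mp hj')
      have hd := auxDvd (k := k) (p := p) (a := k+1) (a' := k+1) heq
      push_cast at hd
      exact auxK1 hk h1 hj1 hj2 hj1' hj2' hd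
    · obtain ⟨i, hi, rfl⟩ := Finset.mem_image.mp hb
      rw [Finset.mem_range] at hi
      intro j hj j' hj' heq
      obtain ⟨hj0, hj1, hj2⟩ := auxMem hk (Finset.mem_coe.mp hj)
      obtain ⟨hj0', hj1', hj2'⟩ := auxMem hk (Finset.mem_coe.mp hj')
      have hd := auxDvd (k := k) (p := p) (a := 1+(2*k+2)*i) (a' := 1+(2*k+2)*i) heq
      push_cast at hd
      have hd' : ((p:ℤ) * (2*k+2)) ∣ (1+(2*k+2)*(i:ℤ))*j - (1+(2*k+2)*(i:ℤ))*j' := by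
        obtain ⟨c, hc⟩ := hd; exact ⟨c, by linear_combination hc⟩
      exact (auxCore hk hp h1 hi hi hj0 hj1 hj2 hj0' hj1' hj2' hd').2
  · -- pairwise disjoint
    intro b hb b' hb' hne
    simp only [Finset.coe_insert, Set.mem_insert_iff, Finset.coe_image, Set.mem_image,
      Finset.mem_coe, Finset.mem_range] at hb hb'
    rw [Finset.disjoint_left]
    intro x hx hx'
    simp only [bStar, Finset.mem_image] at hx hx'
    obtain ⟨j, hj, hxj⟩ := hx
    obtain ⟨j', hj', hxj'⟩ := hx'
    obtain ⟨hj0, hj1, hj2⟩ := auxMem hk hj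
    obtain ⟨hj0', hj1', hj2'⟩ := auxMem hk hj'
    have heq : b * (j : ZMod (p * (2*k+2))) = b' * (j' : ZMod (p * (2*k+2))) := by
      rw [hxj, hxj']
    rcases hb with rfl | ⟨i, hi, rfl⟩ <;> rcases hb' with rfl | ⟨i', hi', rfl⟩
    · exact hne rfl
    · have hd := auxDvd (k := k) (p := p) (a := k+1) (a' := 1+(2*k+2)*i') heq
      push_cast at hd
      have hd' : ((p:ℤ) * (2*k+2)) ∣ ((k:ℤ)+1)*j - (1+(2*k+2)*(i':ℤ))*j' := by
        obtain ⟨c, hc⟩ := hd; exact ⟨c, by linear_combination hc⟩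
      exact auxCross hk hj0' hj1' hj2' hd'
    · have hd := auxDvd (k := k) (p := p) (a := k+1) (a' := 1+(2*k+2)*i) heq.symm
      push_cast at hd
      have hd' : ((p:ℤ) * (2*k+2)) ∣ ((k:ℤ)+1)*j' - (1+(2*k+2)*(i:ℤ))*j := by
        obtain ⟨c, hc⟩ := hd; exact ⟨c, by linear_combination hc⟩
      exact auxCross hk hj0 hj1 hj2 hd'
    · have hd := auxDvd (k := k) (p := p) (a := 1+(2*k+2)*i) (a' := 1+(2*k+2)*i') heq
      push_cast at hd
      have hd' : ((p:ℤ) * (2*k+2)) ∣ (1+(2*k+2)*(i:ℤ))*j - (1+(2*k+2)*(i':ℤ))*j' := by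
        obtain ⟨c, hc⟩ := hd; exact ⟨c, by linear_combination hc⟩
      have := (auxCore hk hp h1 hi hi' hj0 hj1 hj2 hj0' hj1' hj2' hd').1
      subst this
      exact hne rfl
  · -- cardinality of B
    have hlt : ∀ i, i < p → 1 + (2*k+2)*i < p * (2*k+2) := by
      intro i hi
      have h5 : (2*k+2) * (i+1) ≤ (2*k+2) * p := Nat.mul_le_mul_left _ hi
      nlinarith
    have hinj : Set.InjOn (fun i => ((1 + (2 * k + 2) * i : ℕ) : ZMod (p * (2 * k + 2))))
        ↑(Finset.range p) := by
      intro a ha b hb hab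
      simp only [Finset.mem_coe, Finset.mem_range] at ha hb
      have := (ZMod.natCast_eq_natCast_iff _ _ _).mp hab
      unfold Nat.ModEq at this
      rw [Nat.mod_eq_of_lt (hlt a ha), Nat.mod_eq_of_lt (hlt b hb)] at this
      have h6 : (2*k+2) * a = (2*k+2) * b := by omega
      exact Nat.eq_of_mul_eq_mul_left (by omega) h6
    rw [Finset.card_insert_of_notMem, Finset.card_image_of_injOn hinj, Finset.card_range]
    intro hmem
    obtain ⟨i, hi, heq⟩ := Finset.mem_image.mp hmem
    rw [Finset.mem_range] at hi
    have := (ZMod.natCast_eq_natCast_iff _ _ _).mp heq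
    unfold Nat.ModEq at this
    have hk1 : k + 1 < p * (2*k+2) := by nlinarith
    rw [Nat.mod_eq_of_lt (hlt i hi), Nat.mod_eq_of_lt hk1] at this
    rcases i with _ | i
    · omega
    · nlinarith
end
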